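/- arXiv:math/0606642 — 5 statements merged into one kernel-verified Lean document; each statement's English description precedes it below -/
import Mathlib

section
/- Let A be a real linear space of measurable processes on [0,1) with paths bounded on compacts, and X a continuous A-martingale such that X ∈ A, X_0 = 0 and [X,X] = 0. Then X ≡ 0 almost surely. -/
open MeasureTheory Filter Set Topology

noncomputable section

namespace CR

variable {Ω : Type*} [MeasurableSpace Ω]

/-- Regularization `I(ε,Y,X,t) = (1/ε)∫_0^t Y_s (X_{s+ε} - X_s) ds` of the forward integral. -/
def fwdApprox (Y X : ℝ → Ω → ℝ) (ε t : ℝ) (ω : Ω) : ℝ :=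
  (1 / ε) * ∫ s in (0:ℝ)..t, Y s ω * (X (s + ε) ω - X s ω)

/-- `Y` is `X`-forward integrable on `[0,T]`, with forward integral the (continuous in time)
process `L`: for each `t ∈ [0,T]` the regularizations converge in probability to `L t`. -/
def IsForwardIntegral (P : Measure Ω) (Y X : ℝ → Ω → ℝ) (T : ℝ)
    (L : ℝ → Ω → ℝ) : Prop :=
  (∀ ω, ContinuousOn (fun t => L t ω) (Icc 0 T)) ∧
  ∀ t ∈ Icc (0:ℝ) T,
    TendstoInMeasure P (fun ε => fwdApprox Y X ε t) (𝓝[>] (0:ℝ)) (L t)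

/-- Regularization `C(ε,X,Y,t) = (1/ε)∫_0^t (X_{s+ε}-X_s)(Y_{s+ε}-Y_s) ds` of the covariation. -/
def covApprox (X Y : ℝ → Ω → ℝ) (ε t : ℝ) (ω : Ω) : ℝ :=
  (1 / ε) * ∫ s in (0:ℝ)..t, (X (s + ε) ω - X s ω) * (Y (s + ε) ω - Y s ω)

/-- The covariation `[X,Y]` exists on `[0,T]` and equals the (continuous in time) process `C`:
the regularizations converge ucp on `[0,T]` to `C`. -/
def IsCovariation (P : Measure Ω) (X Y : ℝ → Ω → ℝ) (T : ℝ)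
    (C : ℝ → Ω → ℝ) : Prop :=
  (∀ ω, ContinuousOn (fun t => C t ω) (Icc 0 T)) ∧
  TendstoInMeasure P
    (fun ε ω => ⨆ t : Icc (0:ℝ) T, |covApprox X Y ε (t : ℝ) ω - C (t : ℝ) ω|)
    (𝓝[>] (0:ℝ)) 0

/-- `θ` is `X`-improperly forward integrable on `[0,1]` with integral process `L`:
`θ` is `X`-forward integrable on every `[0,t]`, `t < 1`, and the integral converges
almost surely as `t → 1` (to `L 1`). -/
def IsImproperFwd (P : Measure Ω) (θ X : ℝ → Ω → ℝ) (L : ℝ → Ω → ℝ) : Prop :=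
  (∀ t ∈ Ico (0:ℝ) 1, IsForwardIntegral P θ X t L) ∧
  ∀ᵐ ω ∂P, Tendsto (fun t => L t ω) (𝓝[<] (1:ℝ)) (𝓝 (L 1 ω))

/-- `M` is an `A`-martingale under `P`: every `θ ∈ A` is `M`-improperly forward
integrable and `E[∫_0^t θ d⁻M] = 0` for every `t ∈ [0,1]`. -/
def IsAMartingale (P : Measure Ω) (A : Set (ℝ → Ω → ℝ)) (M : ℝ → Ω → ℝ) : Prop :=
  ∀ θ ∈ A, ∃ L : ℝ → Ω → ℝ, IsImproperFwd P θ M L ∧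
    ∀ t ∈ Icc (0:ℝ) 1, Integrable (L t) P ∧ ∫ ω, L t ω ∂P = 0


namespace StmtAux
open intervalIntegral
set_option linter.unusedSectionVars false


lemma II {g : ℝ → ℝ} (hg : Measurable g) {C a b : ℝ} (hC : ∀ s ∈ uIcc a b, |g s| ≤ C) :
    IntervalIntegrable g volume a b := by
  rw [intervalIntegrable_iff]
  refine Integrable.mono' (g := fun _ => C) (integrableOn_const measure_Ioc_lt_top.ne)
    hg.aestronglyMeasurable.restrict ?_
  filter_upwards [ae_restrict_mem measurableSet_uIoc] with s hs
  simpa [Real.norm_eq_abs] using hC s (Ioc_subset_Icc_self hs)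

lemma tendsto_avg {f : ℝ → ℝ} (hfm : Measurable f) {C : ℝ}
    (hb : ∀ s ∈ Icc (0:ℝ) 1, |f s| ≤ C) {c : ℝ} (hc : c ∈ Ico (0:ℝ) 1)
    (hf : ContinuousWithinAt f (Icc 0 1) c) :
    Tendsto (fun ε => (1/ε) * ∫ s in c..(c+ε), f s) (𝓝[>] (0:ℝ)) (𝓝 (f c)) := by
  rw [Metric.tendsto_nhdsWithin_nhds]
  intro η hη
  obtain ⟨δ₁, hδ₁, hδ⟩ := Metric.continuousWithinAt_iff.mp hf (η/2) (by linarith)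
  refine ⟨min δ₁ (1 - c), by simp [hδ₁]; linarith [hc.2], fun {ε} hε hεδ => ?_⟩
  have hε0 : 0 < ε := hε
  have hεδ' : ε < min δ₁ (1 - c) := by simpa [Real.dist_eq, abs_of_pos hε0] using hεδ
  have hce : c + ε ≤ 1 := by have := lt_of_lt_of_le hεδ' (min_le_right _ _); linarith
  have hsub : uIoc c (c+ε) ⊆ Icc (0:ℝ) 1 := by
    rw [uIoc_of_le (by linarith : c ≤ c + ε)]
    exact fun s hs => ⟨le_trans hc.1 hs.1.le, le_trans hs.2 hce⟩
  have hint : IntervalIntegrable f volume c (c+ε) := by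
    refine II hfm (C := C) fun s hs => hb s ?_
    rw [uIcc_of_le (by linarith : c ≤ c + ε)] at hs
    exact ⟨le_trans hc.1 hs.1, le_trans hs.2 hce⟩
  have key : (1/ε) * (∫ s in c..(c+ε), f s) - f c = (1/ε) * ∫ s in c..(c+ε), (f s - f c) := by
    rw [integral_sub hint (intervalIntegrable_const), intervalIntegral.integral_const]
    rw [add_sub_cancel_left, smul_eq_mul]
    field_simp
  have hbd : |∫ s in c..(c+ε), (f s - f c)| ≤ (η/2) * ε := by
    have := norm_integral_le_of_norm_le_const (C := η/2) (f := fun s => f s - f c)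
      (a := c) (b := c+ε) ?_
    · simpa [Real.norm_eq_abs, abs_of_pos hε0] using this
    · intro x hx
      have hx1 : x ∈ Icc (0:ℝ) 1 := hsub hx
      have hxd : dist x c < δ₁ := by
        rw [uIoc_of_le (by linarith : c ≤ c + ε)] at hx
        rw [Real.dist_eq, abs_of_pos (by linarith [hx.1])]
        have := lt_of_lt_of_le hεδ' (min_le_left _ _)
        linarith [hx.2]
      exact (hδ hx1 hxd).le
  rw [Real.dist_eq]
  calc |(1/ε) * (∫ s in c..(c+ε), f s) - f c| = |(1/ε)| * |∫ s in c..(c+ε), (f s - f c)| := by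
        rw [key, abs_mul]
    _ ≤ (1/ε) * ((η/2) * ε) := by
        rw [abs_of_pos (by positivity)]
        exact mul_le_mul_of_nonneg_left hbd (by positivity)
    _ < η := by rw [one_div, inv_mul_eq_div, mul_div_assoc]; rw [div_self hε0.ne']; linarith

lemma tendsto_diffquot {f : ℝ → ℝ} (hfm : Measurable f) {C : ℝ}
    (hb : ∀ s ∈ Icc (0:ℝ) 1, |f s| ≤ C) (hf : ContinuousOn f (Icc 0 1))
    {t : ℝ} (ht : t ∈ Ico (0:ℝ) 1) :
    Tendsto (fun ε => (1/ε) * ∫ s in (0:ℝ)..t, (f (s+ε) - f s)) (𝓝[>] (0:ℝ))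
      (𝓝 (f t - f 0)) := by
  have hmem : Ioo (0:ℝ) (1-t) ∈ 𝓝[>] (0:ℝ) :=
    Ioo_mem_nhdsGT_of_mem ⟨le_refl _, by linarith [ht.2]⟩
  have hII : ∀ a b : ℝ, a ∈ Icc (0:ℝ) 1 → b ∈ Icc (0:ℝ) 1 → IntervalIntegrable f volume a b := by
    intro a b ha hb'
    refine II hfm (C := C) fun s hs => hb s ?_
    rcases hs with ⟨h1, h2⟩
    constructor
    · exact le_trans (le_min ha.1 hb'.1) h1
    · exact le_trans h2 (max_le ha.2 hb'.2)
  have key : ∀ᶠ ε in 𝓝[>] (0:ℝ),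
      (1/ε) * ∫ s in (0:ℝ)..t, (f (s+ε) - f s)
        = (1/ε) * (∫ s in t..(t+ε), f s) - (1/ε) * ∫ s in (0:ℝ)..(0+ε), f s := by
    filter_upwards [hmem] with ε hε
    have hε0 : 0 < ε := hε.1
    have ht1 : t + ε ≤ 1 := by linarith [hε.2]
    have htI : t ∈ Icc (0:ℝ) 1 := ⟨ht.1, ht.2.le⟩
    have hεI : ε ∈ Icc (0:ℝ) 1 := ⟨hε0.le, by linarith [ht.1]⟩
    have htεI : t + ε ∈ Icc (0:ℝ) 1 := ⟨by linarith [ht.1], ht1⟩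
    have h0I : (0:ℝ) ∈ Icc (0:ℝ) 1 := ⟨le_refl _, zero_le_one⟩
    have hc : IntervalIntegrable (fun s => f (s+ε)) volume 0 t := by
      have := (hII ε (t+ε) hεI htεI).comp_add_right ε
      simpa using this
    rw [integral_sub hc (hII 0 t h0I htI), integral_comp_add_right]
    have e1 : (∫ s in ε..t, f s) + ∫ s in t..(t+ε), f s = ∫ s in ε..(t+ε), f s :=
      integral_add_adjacent_intervals (hII ε t hεI htI) (hII t (t+ε) htI htεI)
    have e2 : (∫ s in (0:ℝ)..ε, f s) + ∫ s in ε..t, f s = ∫ s in (0:ℝ)..t, f s :=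
      integral_add_adjacent_intervals (hII 0 ε h0I hεI) (hII ε t hεI htI)
    rw [show ∫ s in (0:ℝ)..(0+ε), f s = ∫ s in (0:ℝ)..ε, f s by norm_num]
    rw [zero_add]
    rw [show (∫ s in ε..(t+ε), f s) - ∫ s in (0:ℝ)..t, f s
        = (∫ s in t..(t+ε), f s) - ∫ s in (0:ℝ)..ε, f s by linarith]
    ring
  refine Tendsto.congr' (EventuallyEq.symm key) ?_
  exact (tendsto_avg hfm hb ht (hf t ⟨ht.1, ht.2.le⟩)).sub
    (tendsto_avg hfm hb ⟨le_refl _, one_pos⟩ (hf 0 ⟨le_refl _, zero_le_one⟩))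

section
variable {X : ℝ → Ω → ℝ} {ω : Ω} {C t ε : ℝ}
  (hm : Measurable fun s => X s ω) (hC : ∀ s ∈ Icc (0:ℝ) 1, |X s ω| ≤ C)
  (ht : t ∈ Ico (0:ℝ) 1) (hε : ε ∈ Ioo 0 (1-t))

include hm hC ht hε

lemma memIcc {s : ℝ} (hs : s ∈ uIcc (0:ℝ) t) : s ∈ Icc (0:ℝ) 1 ∧ s + ε ∈ Icc (0:ℝ) 1 := by
  rw [uIcc_of_le ht.1] at hs
  exact ⟨⟨hs.1, le_trans hs.2 ht.2.le⟩,
    ⟨by linarith [hs.1, hε.1.le], by linarith [hs.2, hε.2]⟩⟩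

lemma hC0 : 0 ≤ C := le_trans (abs_nonneg _) (hC 0 ⟨le_refl _, zero_le_one⟩)

lemma int_cov : IntervalIntegrable
    (fun s => (X (s+ε) ω - X s ω) * (X (s+ε) ω - X s ω)) volume 0 t := by
  refine II (((hm.comp (measurable_id.add_const ε)).sub hm).mul
    ((hm.comp (measurable_id.add_const ε)).sub hm)) (C := (2*C)*(2*C)) fun s hs => ?_
  obtain ⟨h1, h2⟩ := memIcc hm hC ht hε hs
  have b1 : |X (s+ε) ω - X s ω| ≤ 2*C := by
    calc |X (s+ε) ω - X s ω| ≤ |X (s+ε) ω| + |X s ω| := abs_sub _ _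
      _ ≤ 2*C := by linarith [hC _ h2, hC _ h1]
  rw [Pi.mul_apply, abs_mul]
  exact mul_le_mul b1 b1 (abs_nonneg _) (by linarith [hC0 hm hC ht hε])

lemma int_fwd : IntervalIntegrable
    (fun s => X s ω * (X (s+ε) ω - X s ω)) volume 0 t := by
  refine II (hm.mul ((hm.comp (measurable_id.add_const ε)).sub hm)) (C := C*(2*C))
    fun s hs => ?_
  obtain ⟨h1, h2⟩ := memIcc hm hC ht hε hs
  have b1 : |X (s+ε) ω - X s ω| ≤ 2*C := by
    calc |X (s+ε) ω - X s ω| ≤ |X (s+ε) ω| + |X s ω| := abs_sub _ _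
      _ ≤ 2*C := by linarith [hC _ h2, hC _ h1]
  rw [Pi.mul_apply, abs_mul]
  exact mul_le_mul (hC _ h1) b1 (abs_nonneg _) (hC0 hm hC ht hε)

lemma cov_fwd_identity :
    covApprox X X ε t ω + 2 * fwdApprox X X ε t ω
      = (1/ε) * ∫ s in (0:ℝ)..t, ((X (s+ε) ω)^2 - (X s ω)^2) := by
  unfold covApprox fwdApprox
  rw [show (2:ℝ) * ((1/ε) * ∫ s in (0:ℝ)..t, X s ω * (X (s + ε) ω - X s ω))
      = (1/ε) * ∫ s in (0:ℝ)..t, 2 * (X s ω * (X (s + ε) ω - X s ω)) by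
    rw [intervalIntegral.integral_const_mul]; ring]
  rw [← mul_add, ← integral_add (int_cov hm hC ht hε)
    ((int_fwd hm hC ht hε).const_mul 2)]
  congr 1
  apply integral_congr
  intro s _
  ring

lemma abs_cov_le {p : ℝ} (hp : p ∈ Icc 0 t) :
    |covApprox X X ε p ω| ≤ covApprox X X ε t ω := by
  unfold covApprox
  have h0p : 0 ≤ ∫ s in (0:ℝ)..p, (X (s+ε) ω - X s ω) * (X (s+ε) ω - X s ω) :=
    integral_nonneg hp.1 fun s _ => mul_self_nonneg _
  have hpt : (∫ s in (0:ℝ)..p, (X (s+ε) ω - X s ω) * (X (s+ε) ω - X s ω))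
      ≤ ∫ s in (0:ℝ)..t, (X (s+ε) ω - X s ω) * (X (s+ε) ω - X s ω) :=
    integral_mono_interval (le_refl (0:ℝ)) hp.1 hp.2
      (Eventually.of_forall fun s => mul_self_nonneg _) (int_cov hm hC ht hε)
  have hε0 : (0:ℝ) < 1/ε := by have := hε.1; positivity
  rw [abs_of_nonneg (mul_nonneg hε0.le h0p)]
  exact mul_le_mul_of_nonneg_left hpt hε0.le
end

end StmtAux

end CR

open CR in
/-- let `A` be a real linear space of measurable processes on `[0,1)` with
paths bounded on compacts, and `X` a continuous `A`-martingale with `X ∈ A`, `X_0 = 0`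
and `[X,X] = 0`.  Then `X ≡ 0` almost surely. -/
theorem stmt5_amartingale_zero
    {Ω : Type*} [MeasurableSpace Ω] (P : Measure Ω) [IsProbabilityMeasure P]
    (A : Set (ℝ → Ω → ℝ))
    (hmeas : ∀ θ ∈ A, ∀ ω, Measurable fun t => θ t ω)
    (hbdd : ∀ θ ∈ A, ∀ ω, ∀ t ∈ Ico (0:ℝ) 1, ∃ C, ∀ s ∈ Icc (0:ℝ) t, |θ s ω| ≤ C)
    (hlin : ∀ θ ∈ A, ∀ η ∈ A, ∀ a b : ℝ, (fun t ω => a * θ t ω + b * η t ω) ∈ A)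
    (X : ℝ → Ω → ℝ)
    (hXc : ∀ ω, ContinuousOn (fun t => X t ω) (Icc 0 1))
    (hXA : X ∈ A) (hX0 : ∀ ω, X 0 ω = 0)
    (hAmart : IsAMartingale P A X)
    (hqv : ∀ t ∈ Ico (0:ℝ) 1, IsCovariation P X X t (fun _ _ => 0)) :
    ∀ᵐ ω ∂P, ∀ t ∈ Icc (0:ℝ) 1, X t ω = 0 := by
  classical
  obtain ⟨L, ⟨hFwd, -⟩, hL⟩ := hAmart X hXA
  have hXm : ∀ ω, Measurable fun s => X s ω := hmeas X hXA
  have hbound : ∀ ω, ∃ C, ∀ s ∈ Icc (0:ℝ) 1, |X s ω| ≤ C := by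
    intro ω
    obtain ⟨C, hC⟩ := isCompact_Icc.exists_bound_of_continuousOn (hXc ω)
    exact ⟨C, fun s hs => by simpa [Real.norm_eq_abs] using hC s hs⟩
  have key : ∀ t, t ∈ Ico (0:ℝ) 1 → ∀ᵐ ω ∂P, X t ω = 0 := by
    intro t ht
    set u : ℕ → ℝ := fun n => (1 - t) / (n + 2) with hu_def
    have h1t : (0:ℝ) < 1 - t := by linarith [ht.2]
    have hu : ∀ n, u n ∈ Ioo (0:ℝ) (1 - t) := by
      intro n
      refine ⟨by positivity, ?_⟩
      rw [div_lt_iff₀ (by positivity)]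
      nlinarith
    have huT : Tendsto u atTop (𝓝[>] (0:ℝ)) := by
      rw [tendsto_nhdsWithin_iff]
      constructor
      · have hd : Tendsto (fun n : ℕ => ((n:ℝ) + 2)) atTop atTop :=
          tendsto_atTop_add_const_right _ 2 tendsto_natCast_atTop_atTop
        simpa [hu_def] using (tendsto_const_nhds (x := (1-t))).div_atTop hd
      · exact Eventually.of_forall fun n => (hu n).1
    have hfwdM : TendstoInMeasure P (fun n => fwdApprox X X (u n) t) atTop (L t) := by
      intro δ hδ
      exact ((hFwd t ht).2 t ⟨ht.1, le_refl t⟩ δ hδ).comp huT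
    obtain ⟨n1, hn1, hae1⟩ := hfwdM.exists_seq_tendsto_ae
    have hsupM : TendstoInMeasure P
        (fun k => (fun ε ω => ⨆ p : Icc (0:ℝ) t,
          |covApprox X X ε (p:ℝ) ω - (fun (_:ℝ) (_:Ω) => (0:ℝ)) (p:ℝ) ω|) (u (n1 k)))
        atTop 0 := by
      intro δ hδ
      exact ((hqv t ht).2 δ hδ).comp (huT.comp hn1.tendsto_atTop)
    obtain ⟨n2, hn2, hae2⟩ := hsupM.exists_seq_tendsto_ae
    set v : ℕ → ℝ := fun k => u (n1 (n2 k)) with hv_def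
    have hvmem : ∀ k, v k ∈ Ioo (0:ℝ) (1-t) := fun k => hu _
    have hvT : Tendsto v atTop (𝓝[>] (0:ℝ)) := huT.comp ((hn1.comp hn2).tendsto_atTop)
    have hsq : ∀ᵐ ω ∂P, X t ω ^ 2 = 2 * L t ω := by
      filter_upwards [hae1, hae2] with ω h1 h2
      obtain ⟨C, hC⟩ := hbound ω
      have h1' : Tendsto (fun k => fwdApprox X X (v k) t ω) atTop (𝓝 (L t ω)) :=
        h1.comp hn2.tendsto_atTop
      have hcov : Tendsto (fun k => covApprox X X (v k) t ω) atTop (𝓝 0) := by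
        refine squeeze_zero_norm (fun k => ?_) (by simpa using h2)
        have hbA : BddAbove (range fun p : Icc (0:ℝ) t =>
            |covApprox X X (v k) (p:ℝ) ω - (fun (_:ℝ) (_:Ω) => (0:ℝ)) (p:ℝ) ω|) := by
          refine ⟨covApprox X X (v k) t ω, ?_⟩
          rintro x ⟨p, rfl⟩
          simpa using StmtAux.abs_cov_le (hXm ω) hC ht (hvmem k) p.2
        have hle := le_ciSup hbA (⟨t, ⟨ht.1, le_refl t⟩⟩ : Icc (0:ℝ) t)
        simpa [Real.norm_eq_abs] using hle
      have hcombo : Tendsto (fun ε => covApprox X X ε t ω + 2 * fwdApprox X X ε t ω)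
          (𝓝[>] (0:ℝ)) (𝓝 (X t ω ^ 2)) := by
        have hb2 : ∀ s ∈ Icc (0:ℝ) 1, |(X s ω)^2| ≤ C^2 := by
          intro s hs
          rw [abs_pow]
          exact pow_le_pow_left₀ (abs_nonneg _) (hC s hs) 2
        have hdq := StmtAux.tendsto_diffquot (f := fun s => (X s ω)^2)
          ((hXm ω).pow_const 2) hb2 ((hXc ω).pow 2) ht
        have hlim : (X t ω)^2 - (X 0 ω)^2 = X t ω ^ 2 := by rw [hX0 ω]; ring
        rw [hlim] at hdq
        refine Tendsto.congr' ?_ hdq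
        filter_upwards [Ioo_mem_nhdsGT_of_mem (⟨le_refl (0:ℝ), h1t⟩ : (0:ℝ) ∈ Ico 0 (1-t))]
          with ε hε
        exact (StmtAux.cov_fwd_identity (hXm ω) hC ht hε).symm
      have hcombov : Tendsto (fun k => covApprox X X (v k) t ω + 2 * fwdApprox X X (v k) t ω)
          atTop (𝓝 (X t ω ^ 2)) := hcombo.comp hvT
      have h2fwd : Tendsto (fun k => 2 * fwdApprox X X (v k) t ω) atTop (𝓝 (X t ω ^ 2 - 0)) := by
        refine (hcombov.sub hcov).congr fun k => ?_
        ring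
      have h2fwd' : Tendsto (fun k => 2 * fwdApprox X X (v k) t ω) atTop (𝓝 (2 * L t ω)) :=
        h1'.const_mul 2
      have := tendsto_nhds_unique h2fwd h2fwd'
      linarith
    obtain ⟨hLint, hLzero⟩ := hL t ⟨ht.1, ht.2.le⟩
    have hEq : (fun ω => X t ω ^ 2) =ᵐ[P] fun ω => 2 * L t ω := hsq
    have hint2 : Integrable (fun ω => X t ω ^ 2) P :=
      (hLint.const_mul 2).congr hEq.symm
    have hIzero : ∫ ω, X t ω ^ 2 ∂P = 0 := by
      rw [integral_congr_ae hEq, integral_const_mul, hLzero, mul_zero]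
    have hz := (integral_eq_zero_iff_of_nonneg (fun ω => sq_nonneg (X t ω)) hint2).mp hIzero
    filter_upwards [hz] with ω hω
    have hω' : X t ω ^ 2 = 0 := hω
    exact (pow_eq_zero_iff two_ne_zero).mp hω'
  have hQ : ∀ᵐ ω ∂P, ∀ q : ℚ, (q:ℝ) ∈ Ico (0:ℝ) 1 → X (q:ℝ) ω = 0 := by
    rw [ae_all_iff]
    intro q
    by_cases hq : (q:ℝ) ∈ Ico (0:ℝ) 1
    · filter_upwards [key q hq] with ω h _
      exact h
    · exact Eventually.of_forall fun ω h => absurd h hq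
  filter_upwards [hQ] with ω hω t ht
  rcases eq_or_lt_of_le ht.1 with h0 | h0
  · rw [← h0]
    exact hX0 ω
  · have hexq : ∀ n : ℕ, ∃ qn : ℚ, max (t - 1/((n:ℝ)+1)) 0 < (qn:ℝ) ∧ (qn:ℝ) < t := by
      intro n
      apply exists_rat_btwn
      apply max_lt ?_ h0
      have h1n : (0:ℝ) < 1/((n:ℝ)+1) := by positivity
      linarith
    choose q hq1 hq2 using hexq
    have hmemq : ∀ n, ((q n : ℝ)) ∈ Ico (0:ℝ) 1 :=
      fun n => ⟨le_of_lt (lt_of_le_of_lt (le_max_right _ _) (hq1 n)),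
        lt_of_lt_of_le (hq2 n) ht.2⟩
    have hqt : Tendsto (fun n => ((q n : ℝ))) atTop (𝓝 t) := by
      have hlow : Tendsto (fun n : ℕ => t - 1/((n:ℝ)+1)) atTop (𝓝 t) := by
        have hn0 : Tendsto (fun n : ℕ => 1/((n:ℝ)+1)) atTop (𝓝 0) :=
          tendsto_one_div_add_atTop_nhds_zero_nat
        simpa using tendsto_const_nhds.sub hn0
      refine tendsto_of_tendsto_of_tendsto_of_le_of_le hlow tendsto_const_nhds
        (fun n => ?_) (fun n => (hq2 n).le)
      exact le_trans (le_max_left _ _) (hq1 n).le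
    have hXt : Tendsto (fun n => X ((q n : ℝ)) ω) atTop (𝓝 (X t ω)) := by
      refine ((hXc ω) t ht).tendsto.comp ?_
      exact tendsto_nhdsWithin_of_tendsto_nhds_of_eventually_within _ hqt
        (Eventually.of_forall fun n => ⟨(hmemq n).1, (hmemq n).2.le⟩)
    have hz : Tendsto (fun _ : ℕ => (0:ℝ)) atTop (𝓝 (X t ω)) :=
      hXt.congr fun n => hω (q n) (hmemq n)
    exact tendsto_nhds_unique hz tendsto_const_nhds
end
end

section
/- Let A be a class of processes containing all bounded processes measurable with respect to the predictable σ-algebra of a filtration F, and let X be a continuous A-martingale adapted to F with X_t integrable for each t. Then X is an F-martingale. -/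
open MeasureTheory Filter Set Topology

noncomputable section


namespace CRaux

/-- Average of a continuous function over a shrinking right interval tends to the value. -/
lemma avg_tendsto {f : ℝ → ℝ} (hf : ContinuousOn f (Icc 0 1)) {m : ℝ} (hm : m ∈ Ico (0:ℝ) 1) :
    Tendsto (fun ε => (1 / ε) * ∫ r in m..(m + ε), f r) (𝓝[>] (0:ℝ)) (𝓝 (f m)) := by
  have h0m : 0 ≤ m := hm.1
  have hm1 : m < 1 := hm.2
  have hsub : Ioo m 1 ⊆ Icc 0 1 := fun x hx => ⟨h0m.trans hx.1.le, hx.2.le⟩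
  have hIooMem : Ioo m 1 ∈ 𝓝[>] m := Ioo_mem_nhdsGT_of_mem ⟨le_rfl, hm1⟩
  have hmeas : StronglyMeasurableAtFilter f (𝓝[Ioi m] m) volume :=
    ⟨Ioo m 1, hIooMem, ((hf.mono hsub).aestronglyMeasurable measurableSet_Ioo)⟩
  have hcont : ContinuousWithinAt f (Ioi m) m :=
    (hf.continuousWithinAt ⟨h0m, hm1.le⟩).mono_of_mem_nhdsWithin (mem_of_superset hIooMem hsub)
  have hint : IntervalIntegrable f volume m m := by
    simp [intervalIntegrable_iff]
  have hderiv : HasDerivWithinAt (fun x => ∫ r in m..x, f r) (f m) (Ici m) m :=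
    intervalIntegral.integral_hasDerivWithinAt_right hint hmeas hcont
  rw [hasDerivWithinAt_iff_tendsto_slope] at hderiv
  have hmap : Tendsto (fun ε : ℝ => m + ε) (𝓝[>] (0:ℝ)) (𝓝[Ici m \ {m}] m) := by
    apply tendsto_nhdsWithin_of_tendsto_nhds_of_eventually_within
    · have : Tendsto (fun ε : ℝ => m + ε) (𝓝 0) (𝓝 m) := by
        have h0 : Tendsto (fun ε : ℝ => m + ε) (𝓝 0) (𝓝 (m + 0)) :=
          (continuous_const.add continuous_id).tendsto (0:ℝ)
        rw [add_zero] at h0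
        exact h0
      exact this.mono_left nhdsWithin_le_nhds
    · filter_upwards [self_mem_nhdsWithin] with ε hε
      have hε' : (0:ℝ) < ε := hε
      exact ⟨by simp [le_add_of_nonneg_right hε'.le], by simp; linarith⟩
  have := hderiv.comp hmap
  refine this.congr fun ε => ?_
  simp [slope_def_field, intervalIntegral.integral_same]
  ring

/-- Deterministic computation of the forward-integral regularization limit for an
indicator-of-interval integrand. -/
lemma det_limit {f : ℝ → ℝ} (hf : ContinuousOn f (Icc 0 1)) {s t u : ℝ}
    (hs : 0 ≤ s) (hs1 : s < 1) (hst : s ≤ t) (ht1 : t ≤ 1) (hu : u ∈ Ico (0:ℝ) 1) (a : ℝ) :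
    Tendsto (fun ε => (1 / ε) * ∫ r in (0:ℝ)..u,
        (Ioc s t).indicator (fun _ => a) r * (f (r + ε) - f r))
      (𝓝[>] (0:ℝ)) (𝓝 (a * (f (max s (min u t)) - f s))) := by
  set m := max s (min u t) with hm_def
  have hsm : s ≤ m := le_max_left _ _
  have h0u : 0 ≤ u := hu.1
  have hm1 : m < 1 := max_lt hs1 (lt_of_le_of_lt (min_le_left u t) hu.2)
  have h0m : 0 ≤ m := hs.trans hsm
  have hIcc : ∀ x ∈ Icc (0:ℝ) 1, ∀ y ∈ Icc (0:ℝ) 1, IntervalIntegrable f volume x y := by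
    intro x hx y hy
    apply ContinuousOn.intervalIntegrable
    apply hf.mono
    rw [uIcc_eq_union]
    exact union_subset (Icc_subset_Icc hx.1 hy.2) (Icc_subset_Icc hy.1 hx.2)
  have hEq : (fun ε => (1 / ε) * ∫ r in (0:ℝ)..u,
        (Ioc s t).indicator (fun _ => a) r * (f (r + ε) - f r))
      =ᶠ[𝓝[>] (0:ℝ)] (fun ε =>
        a * ((1 / ε) * ∫ r in m..(m + ε), f r) - a * ((1 / ε) * ∫ r in s..(s + ε), f r)) := by
    filter_upwards [Ioo_mem_nhdsGT_of_mem (show (0:ℝ) ∈ Ico 0 (1 - m) from ⟨le_rfl, by linarith⟩)]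
      with ε hε
    obtain ⟨hε0, hε1⟩ := hε
    have hmem : ∀ x : ℝ, s ≤ x → x ≤ m + ε → x ∈ Icc (0:ℝ) 1 :=
      fun x h1 h2 => ⟨hs.trans h1, by linarith⟩
    have h1 : ∀ r : ℝ, (Ioc s t).indicator (fun _ => a) r * (f (r + ε) - f r) =
        (Ioc s t).indicator (fun r => a * (f (r + ε) - f r)) r := by
      intro r; by_cases hr : r ∈ Ioc s t <;> simp [hr]
    rw [intervalIntegral.integral_congr (g := fun r =>
        (Ioc s t).indicator (fun r => a * (f (r + ε) - f r)) r) (fun r _ => h1 r)]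
    rw [intervalIntegral.integral_of_le h0u, MeasureTheory.setIntegral_indicator measurableSet_Ioc]
    have hset : Ioc (0:ℝ) u ∩ Ioc s t = Ioc s m := by
      rw [Set.Ioc_inter_Ioc, max_eq_right hs]
      rcases le_total s (min u t) with h | h
      · rw [hm_def, max_eq_right h]
      · rw [Set.Ioc_eq_empty (not_lt.mpr h), hm_def, max_eq_left h, Set.Ioc_self]
    rw [hset, ← intervalIntegral.integral_of_le hsm]
    have if2 : IntervalIntegrable f volume s m := hIcc s ⟨hs, by linarith⟩ m ⟨h0m, by linarith⟩
    have if1 : IntervalIntegrable (fun r => f (r + ε)) volume s m := by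
      have := (hIcc (s + ε) (hmem _ (by linarith) (by linarith))
        (m + ε) (hmem _ (by linarith) le_rfl)).comp_add_right ε
      simpa using this
    rw [intervalIntegral.integral_const_mul, intervalIntegral.integral_sub if1 if2,
      intervalIntegral.integral_comp_add_right f ε]
    have A1 : (∫ r in s..m, f r) + ∫ r in m..(m + ε), f r = ∫ r in s..(m + ε), f r :=
      intervalIntegral.integral_add_adjacent_intervals if2
        (hIcc m ⟨h0m, by linarith⟩ (m + ε) (hmem _ (by linarith) le_rfl))
    have A2 : (∫ r in s..(s + ε), f r) + ∫ r in (s + ε)..(m + ε), f r = ∫ r in s..(m + ε), f r :=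
      intervalIntegral.integral_add_adjacent_intervals
        (hIcc s ⟨hs, by linarith⟩ (s + ε) (hmem _ (by linarith) (by linarith)))
        (hIcc (s + ε) (hmem _ (by linarith) (by linarith)) (m + ε) (hmem _ (by linarith) le_rfl))
    have key : (∫ r in (s + ε)..(m + ε), f r) - ∫ r in s..m, f r
        = (∫ r in m..(m + ε), f r) - ∫ r in s..(s + ε), f r := by linarith
    rw [key]; ring
  have T1 := (avg_tendsto hf ⟨h0m, hm1⟩).const_mul a
  have T2 := (avg_tendsto hf ⟨hs, hs1⟩).const_mul a
  have hT := T1.sub T2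
  rw [← mul_sub] at hT
  exact hT.congr' hEq.symm

/-- Left-continuity of the indicator of a left-open right-closed interval. -/
lemma lc_ind (a s t r0 : ℝ) :
    ContinuousWithinAt (fun r => (Ioc s t).indicator (fun _ => a) r) (Iio r0) r0 := by
  rcases le_or_gt r0 s with h | h
  · refine ContinuousWithinAt.congr_of_eventuallyEq (continuousWithinAt_const (b := (0:ℝ))) ?_ ?_
    · filter_upwards [eventually_mem_nhdsWithin] with r hr
      exact indicator_of_notMem (fun hmem => absurd hmem.1 (not_lt.mpr ((le_of_lt hr).trans h))) _
    · exact indicator_of_notMem (fun hmem => absurd hmem.1 (not_lt.mpr h)) _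
  rcases le_or_gt r0 t with h' | h'
  · refine ContinuousWithinAt.congr_of_eventuallyEq (continuousWithinAt_const (b := a)) ?_ ?_
    · filter_upwards [Ioo_mem_nhdsLT_of_mem (show r0 ∈ Ioc s r0 from ⟨h, le_rfl⟩)] with r hr
      exact indicator_of_mem (show r ∈ Ioc s t from ⟨hr.1, hr.2.le.trans h'⟩) _
    · exact indicator_of_mem (show r0 ∈ Ioc s t from ⟨h, h'⟩) _
  · refine ContinuousWithinAt.congr_of_eventuallyEq (continuousWithinAt_const (b := (0:ℝ))) ?_ ?_
    · filter_upwards [Ioo_mem_nhdsLT_of_mem (show r0 ∈ Ioc t r0 from ⟨h', le_rfl⟩)] with r hr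
      exact indicator_of_notMem (fun hmem => absurd hmem.2 (not_le.mpr hr.1)) _
    · exact indicator_of_notMem (fun hmem => absurd hmem.2 (not_le.mpr h')) _

end CRaux


namespace CR

/-- The predictable σ-algebra `P(𝓕)` on `ℝ × Ω`: the σ-algebra generated by all
left-continuous `𝓕`-adapted processes. -/
def predictableSigma {Ω : Type*} [m0 : MeasurableSpace Ω] (𝓕 : Filtration ℝ m0) :
    MeasurableSpace (ℝ × Ω) :=
  ⨆ (f : ℝ → Ω → ℝ) (_ : Adapted 𝓕 (fun t => f t) ∧
      ∀ ω t, ContinuousWithinAt (fun s => f s ω) (Iio t) t),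
    MeasurableSpace.comap (fun p : ℝ × Ω => f p.1 p.2) (borel ℝ)

end CR

open CR in
/-- if the class `A` contains all bounded processes that are measurable with
respect to the predictable σ-algebra of `𝓕`, and `X` is a continuous `A`-martingale
adapted to `𝓕` with `X_t` integrable for each `t ∈ [0,1]`, then `X` is an
`𝓕`-martingale (on `[0,1]`). -/
theorem stmt6_amartingale_is_martingale
    {Ω : Type*} [m0 : MeasurableSpace Ω] (P : Measure Ω) [IsProbabilityMeasure P]
    (𝓕 : Filtration ℝ m0) (A : Set (ℝ → Ω → ℝ))
    (hA : ∀ g : ℝ × Ω → ℝ, Measurable[predictableSigma 𝓕] g →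
      (∃ C, ∀ p, |g p| ≤ C) → (fun t ω => g (t, ω)) ∈ A)
    (X : ℝ → Ω → ℝ)
    (hXc : ∀ ω, ContinuousOn (fun t => X t ω) (Icc 0 1))
    (hXad : Adapted 𝓕 fun t => X t)
    (hXint : ∀ t ∈ Icc (0:ℝ) 1, Integrable (X t) P)
    (hAmart : IsAMartingale P A X) :
    ∀ s t : ℝ, 0 ≤ s → s ≤ t → t ≤ 1 → P[X t|𝓕 s] =ᵐ[P] X s := by
  intro s t hs hst ht1
  rcases eq_or_lt_of_le hst with rfl | hst'
  · rw [condExp_of_stronglyMeasurable (𝓕.le s) (hXad s).stronglyMeasurable (hXint s ⟨hs, ht1⟩)]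
  · have hs1 : s < 1 := lt_of_lt_of_le hst' ht1
    have h0t : 0 ≤ t := hs.trans hst
    have key : ∀ B : Set Ω, MeasurableSet[𝓕 s] B →
        ∫ ω in B, X t ω ∂P = ∫ ω in B, X s ω ∂P := by
      intro B hB
      have hBm : MeasurableSet B := 𝓕.le s B hB
      set θ : ℝ → Ω → ℝ := fun r ω =>
        (Ioc s t).indicator (fun _ => B.indicator (fun _ => (1:ℝ)) ω) r with hθ
      have hadp : Adapted 𝓕 (fun r => θ r) := by
        intro r
        show Measurable[𝓕 r] (θ r)
        by_cases hr : r ∈ Ioc s t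
        · have heq : θ r = fun ω => B.indicator (fun _ => (1:ℝ)) ω := by
            funext ω; simp [hθ, indicator_of_mem hr]
          rw [heq]
          exact measurable_const.indicator ((𝓕.mono hr.1.le) B hB)
        · have heq : θ r = fun _ => (0:ℝ) := by
            funext ω; simp [hθ, indicator_of_notMem hr]
          rw [heq]; exact measurable_const
      have hlc : ∀ ω r0, ContinuousWithinAt (fun r => θ r ω) (Iio r0) r0 :=
        fun ω r0 => CRaux.lc_ind _ s t r0
      have hgmeas : Measurable[predictableSigma 𝓕] (fun p : ℝ × Ω => θ p.1 p.2) := by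
        have hle : MeasurableSpace.comap (fun p : ℝ × Ω => θ p.1 p.2) (borel ℝ) ≤
            predictableSigma 𝓕 :=
          le_iSup₂ (f := fun (f : ℝ → Ω → ℝ) (_ : Adapted 𝓕 (fun t => f t) ∧
              ∀ ω t, ContinuousWithinAt (fun s => f s ω) (Iio t) t) =>
            MeasurableSpace.comap (fun p : ℝ × Ω => f p.1 p.2) (borel ℝ)) θ ⟨hadp, hlc⟩
        rw [measurable_iff_comap_le]
        exact le_trans (le_of_eq (by rw [BorelSpace.measurable_eq (α := ℝ)])) hle
      have hbd : ∀ p : ℝ × Ω, |θ p.1 p.2| ≤ 1 := by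
        intro p
        simp only [hθ, Set.indicator_apply]
        by_cases h2 : p.2 ∈ B <;> split_ifs <;> simp [h2]
      obtain ⟨L, ⟨hLfwd, hLlim⟩, hL0⟩ :=
        hAmart _ (hA (fun p : ℝ × Ω => θ p.1 p.2) hgmeas ⟨1, hbd⟩)
      have ident : ∀ u, u ∈ Ico (0:ℝ) 1 → L u =ᵐ[P]
          fun ω => B.indicator (fun _ => (1:ℝ)) ω * (X (max s (min u t)) ω - X s ω) := by
        intro u hu
        obtain ⟨-, hconv⟩ := hLfwd u hu
        have hconv_u := hconv u ⟨hu.1, le_rfl⟩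
        obtain ⟨es, hes⟩ := exists_seq_tendsto (𝓝[>] (0:ℝ))
        have h1 : TendstoInMeasure P
            (fun n => fwdApprox (fun r ω => θ r ω) X (es n) u) atTop (L u) :=
          fun δ hδ => (hconv_u δ hδ).comp hes
        obtain ⟨ns, hns_mono, hae⟩ := h1.exists_seq_tendsto_ae
        have hpt : ∀ ω, Tendsto (fun i => fwdApprox (fun r ω => θ r ω) X (es (ns i)) u ω) atTop
            (𝓝 (B.indicator (fun _ => (1:ℝ)) ω * (X (max s (min u t)) ω - X s ω))) := by
          intro ω
          have hdet := CRaux.det_limit (hXc ω) hs hs1 hst ht1 hu (B.indicator (fun _ => (1:ℝ)) ω)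
          exact hdet.comp (hes.comp hns_mono.tendsto_atTop)
        filter_upwards [hae] with ω hω
        exact tendsto_nhds_unique hω (hpt ω)
      have hfin : (∫ ω, B.indicator (fun _ => (1:ℝ)) ω * (X t ω - X s ω) ∂P) = 0 →
          ∫ ω in B, X t ω ∂P = ∫ ω in B, X s ω ∂P := by
        intro h0
        have hconv : (fun ω => B.indicator (fun _ => (1:ℝ)) ω * (X t ω - X s ω))
            = B.indicator (fun ω => X t ω - X s ω) := by
          funext ω; by_cases hω : ω ∈ B <;> simp [hω]
        rw [hconv, integral_indicator hBm,
          integral_sub ((hXint t ⟨h0t, ht1⟩).integrableOn)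
            ((hXint s ⟨hs, hs1.le⟩).integrableOn)] at h0
        linarith
      rcases lt_or_eq_of_le ht1 with ht | ht
      · have hid := ident t ⟨h0t, ht⟩
        have hmz : max s (min t t) = t := by rw [min_self]; exact max_eq_right hst
        rw [hmz] at hid
        apply hfin
        rw [← integral_congr_ae hid]
        exact (hL0 t ⟨h0t, ht1⟩).2
      · subst ht
        set u : ℕ → ℝ := fun n => 1 - 1 / (n + 1) with hu_def
        have hu_mem : ∀ n, u n ∈ Ico (0:ℝ) 1 := by
          intro n
          have hpos : (0:ℝ) < (n:ℝ) + 1 := by positivity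
          constructor
          · have h1 : 1 / ((n:ℝ) + 1) ≤ 1 := by
              rw [div_le_one hpos]; linarith [Nat.cast_nonneg (α := ℝ) n]
            simp only [hu_def]; linarith
          · have h2 : 0 < 1 / ((n:ℝ) + 1) := by positivity
            simp only [hu_def]; linarith
        have hu_tend : Tendsto u atTop (𝓝 (1:ℝ)) := by
          have h := tendsto_one_div_add_atTop_nhds_zero_nat (𝕜 := ℝ)
          have := (tendsto_const_nhds (x := (1:ℝ)) (f := atTop)).sub h
          simpa [hu_def] using this
        have hu_tendW : Tendsto u atTop (𝓝[<] (1:ℝ)) :=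
          tendsto_nhdsWithin_of_tendsto_nhds_of_eventually_within _ hu_tend
            (Eventually.of_forall fun n => (hu_mem n).2)
        have hXcont1 : ∀ ω, Tendsto (fun n => X (max s (u n)) ω) atTop (𝓝 (X 1 ω)) := by
          intro ω
          have hmax : Tendsto (fun n => max s (u n)) atTop (𝓝 (1:ℝ)) := by
            have h := (tendsto_const_nhds (x := s) (f := atTop)).max hu_tend
            rwa [max_eq_right hs1.le] at h
          have hcw : ContinuousWithinAt (fun r => X r ω) (Icc 0 1) 1 :=
            (hXc ω).continuousWithinAt ⟨zero_le_one, le_rfl⟩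
          apply hcw.tendsto.comp
          apply tendsto_nhdsWithin_of_tendsto_nhds_of_eventually_within _ hmax
          exact Eventually.of_forall fun n =>
            ⟨le_max_of_le_right (hu_mem n).1, max_le hs1.le (hu_mem n).2.le⟩
        have hid_all : ∀ᵐ ω ∂P, ∀ n, L (u n) ω =
            B.indicator (fun _ => (1:ℝ)) ω * (X (max s (min (u n) 1)) ω - X s ω) :=
          ae_all_iff.mpr fun n => ident (u n) (hu_mem n)
        have hid1 : L 1 =ᵐ[P] fun ω => B.indicator (fun _ => (1:ℝ)) ω * (X 1 ω - X s ω) := by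
          filter_upwards [hid_all, hLlim] with ω hω hlim
          have h1 : Tendsto (fun n => L (u n) ω) atTop (𝓝 (L 1 ω)) := hlim.comp hu_tendW
          have h3 := ((hXcont1 ω).sub (tendsto_const_nhds (x := X s ω))).const_mul
            (B.indicator (fun _ => (1:ℝ)) ω)
          have h2 : Tendsto (fun n => L (u n) ω) atTop
              (𝓝 (B.indicator (fun _ => (1:ℝ)) ω * (X 1 ω - X s ω))) := by
            refine Tendsto.congr (fun n => ?_) h3
            rw [hω n, min_eq_left (hu_mem n).2.le]
          exact tendsto_nhds_unique h1 h2
        apply hfin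
        rw [← integral_congr_ae hid1]
        exact (hL0 1 ⟨zero_le_one, le_rfl⟩).2
    exact (ae_eq_condExp_of_forall_setIntegral_eq (𝓕.le s) (hXint t ⟨h0t, ht1⟩)
      (fun B hB _ => (hXint s ⟨hs, hs1.le⟩).integrableOn)
      (fun B hB _ => (key B hB).symm)
      ((hXad s).stronglyMeasurable.aestronglyMeasurable)).symm
end
end

section
/- Let ξ be a continuous finite quadratic variation process with ξ_0 = 0, and for θ ∈ A set L^θ = ∫_0^1 θ_t d⁻ξ_t − (1/2)∫_0^1 θ_t² d[ξ]_t. Then for any concave strictly increasing F with bounded derivative F', the map f(θ) = E[F(L^θ)] is concave on A; indeed for all θ, π ∈ A and λ ∈ [0,1], L^{π+λ(θ−π)} − L^π − λ(L^θ − L^π) = (1/2)λ(1−λ)∫_0^1 (θ_t − π_t)² d[ξ]_t ≥ 0. -/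
open MeasureTheory Filter Set Topology

noncomputable section

namespace CR

/-- `L^θ = ∫_0^1 θ d⁻ξ − ½ ∫_0^1 θ² d[ξ]`, where `Iξ θ` denotes the (improper) forward
integral `∫_0^1 θ d⁻ξ` and `ν ω` the Stieltjes measure of the quadratic variation
`[ξ](ω)`. -/
def Lfun {Ω : Type*} [MeasurableSpace Ω] (Iξ : (ℝ → Ω → ℝ) → Ω → ℝ)
    (ν : Ω → Measure ℝ) (θ : ℝ → Ω → ℝ) (ω : Ω) : ℝ :=
  Iξ θ ω - (1 / 2) * ∫ s in Ioc (0:ℝ) 1, (θ s ω) ^ 2 ∂(ν ω)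

end CR

open CR in
/-- with `ξ` a continuous finite quadratic variation process, `ξ_0 = 0`,
and `L^θ = ∫_0^1 θ d⁻ξ − ½∫_0^1 θ² d[ξ]`, for any concave strictly increasing `F` with
bounded derivative `F'`, the map `f(θ) = E[F(L^θ)]` is concave on `A`; indeed for all
`θ, π ∈ A` and `l ∈ [0,1]`,
`L^{π+l(θ−π)} − L^π − l(L^θ − L^π) = ½ l(1−l) ∫_0^1 (θ−π)² d[ξ] ≥ 0`. -/
theorem stmt14_concavity
    {Ω : Type*} [MeasurableSpace Ω] (P : Measure Ω) [IsProbabilityMeasure P]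
    (A : Set (ℝ → Ω → ℝ))
    (hlin : ∀ θ ∈ A, ∀ η ∈ A, ∀ a b : ℝ, (fun t ω => a * θ t ω + b * η t ω) ∈ A)
    (hmeas : ∀ θ ∈ A, ∀ ω, Measurable fun s => θ s ω)
    (hbdd : ∀ θ ∈ A, ∀ ω, ∃ C, ∀ s ∈ Icc (0:ℝ) 1, |θ s ω| ≤ C)
    (ξ : ℝ → Ω → ℝ)
    (hξc : ∀ ω, ContinuousOn (fun t => ξ t ω) (Icc 0 1)) (hξ0 : ∀ ω, ξ 0 ω = 0)
    (QV : ℝ → Ω → ℝ) (hQV : IsCovariation P ξ ξ 1 QV)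
    (ν : Ω → Measure ℝ) (hνfin : ∀ ω, IsFiniteMeasure (ν ω))
    (hν : ∀ ω, ∀ a b : ℝ, 0 ≤ a → a ≤ b → b ≤ 1 →
      (ν ω (Ioc a b)).toReal = QV b ω - QV a ω)
    (Iξ : (ℝ → Ω → ℝ) → Ω → ℝ)
    (hIξ : ∀ θ ∈ A, ∃ L : ℝ → Ω → ℝ, IsImproperFwd P θ ξ L ∧ ∀ ω, L 1 ω = Iξ θ ω)
    (hIlin : ∀ θ ∈ A, ∀ η ∈ A, ∀ a b : ℝ, ∀ ω,
      Iξ (fun t ω => a * θ t ω + b * η t ω) ω = a * Iξ θ ω + b * Iξ η ω)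
    (hint : ∀ θ ∈ A, Integrable (Iξ θ) P ∧
      Integrable (fun ω => ∫ s in Ioc (0:ℝ) 1, (θ s ω) ^ 2 ∂(ν ω)) P)
    (F F' : ℝ → ℝ)
    (hFconc : ∀ x y : ℝ, ∀ l : ℝ, 0 ≤ l → l ≤ 1 →
      l * F x + (1 - l) * F y ≤ F (l * x + (1 - l) * y))
    (hFmono : StrictMono F)
    (hF' : ∀ x, HasDerivAt F (F' x) x) (hF'b : ∃ C, ∀ x, |F' x| ≤ C) :
    (∀ θ ∈ A, ∀ π ∈ A, ∀ l : ℝ, 0 ≤ l → l ≤ 1 → ∀ ω,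
      Lfun Iξ ν (fun t ω => (1 - l) * π t ω + l * θ t ω) ω - Lfun Iξ ν π ω
          - l * (Lfun Iξ ν θ ω - Lfun Iξ ν π ω)
        = (1 / 2) * l * (1 - l) * ∫ s in Ioc (0:ℝ) 1, (θ s ω - π s ω) ^ 2 ∂(ν ω) ∧
      0 ≤ (1 / 2) * l * (1 - l) * ∫ s in Ioc (0:ℝ) 1, (θ s ω - π s ω) ^ 2 ∂(ν ω)) ∧
    (∀ θ ∈ A, ∀ π ∈ A, ∀ l : ℝ, 0 ≤ l → l ≤ 1 →
      l * ∫ ω, F (Lfun Iξ ν θ ω) ∂P + (1 - l) * ∫ ω, F (Lfun Iξ ν π ω) ∂P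
        ≤ ∫ ω, F (Lfun Iξ ν (fun t ω => l * θ t ω + (1 - l) * π t ω) ω) ∂P) := by
  obtain ⟨C, hC⟩ := hF'b
  have hC0 : 0 ≤ C := le_trans (abs_nonneg _) (hC 0)
  have hFcont : Continuous F :=
    continuous_iff_continuousAt.2 fun x => (hF' x).continuousAt
  have hlip : ∀ x y : ℝ, |F x - F y| ≤ C * |x - y| := by
    intro x y
    have := convex_univ.norm_image_sub_le_of_norm_hasDerivWithin_le
      (f := F) (f' := F') (fun z _ => (hF' z).hasDerivWithinAt)
      (fun z _ => by simpa [Real.norm_eq_abs] using hC z) (Set.mem_univ y) (Set.mem_univ x)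
    simpa [Real.norm_eq_abs] using this
  -- key pointwise identity
  have key : ∀ θ ∈ A, ∀ π ∈ A, ∀ l : ℝ, 0 ≤ l → l ≤ 1 → ∀ ω,
      Lfun Iξ ν (fun t ω => (1 - l) * π t ω + l * θ t ω) ω - Lfun Iξ ν π ω
          - l * (Lfun Iξ ν θ ω - Lfun Iξ ν π ω)
        = (1 / 2) * l * (1 - l) * ∫ s in Ioc (0:ℝ) 1, (θ s ω - π s ω) ^ 2 ∂(ν ω) := by
    intro θ hθ π hπ l hl0 hl1 ω
    haveI := hνfin ω
    obtain ⟨Cθ, hCθ⟩ := hbdd θ hθ ω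
    obtain ⟨Cπ, hCπ⟩ := hbdd π hπ ω
    have hmθ := hmeas θ hθ ω
    have hmπ := hmeas π hπ ω
    set μ := (ν ω).restrict (Ioc (0:ℝ) 1) with hμ
    have ibd : ∀ (f : ℝ → ℝ) (D : ℝ), Measurable f →
        (∀ s ∈ Icc (0:ℝ) 1, |f s| ≤ D) → Integrable f μ := by
      intro f D hm hD
      refine Integrable.mono' (integrable_const D) hm.aestronglyMeasurable ?_
      rw [hμ]
      filter_upwards [ae_restrict_mem measurableSet_Ioc] with s hs
      exact hD s (Ioc_subset_Icc_self hs)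
    have hθ2 : Integrable (fun s => θ s ω ^ 2) μ := by
      refine ibd _ (Cθ ^ 2) (by fun_prop) fun s hs => ?_
      rw [abs_pow]
      exact pow_le_pow_left₀ (abs_nonneg _) (hCθ s hs) 2
    have hπ2 : Integrable (fun s => π s ω ^ 2) μ := by
      refine ibd _ (Cπ ^ 2) (by fun_prop) fun s hs => ?_
      rw [abs_pow]
      exact pow_le_pow_left₀ (abs_nonneg _) (hCπ s hs) 2
    have hd2 : Integrable (fun s => (θ s ω - π s ω) ^ 2) μ := by
      refine ibd _ ((Cθ + Cπ) ^ 2) (by fun_prop) fun s hs => ?_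
      rw [abs_pow]
      refine pow_le_pow_left₀ (abs_nonneg _) ?_ 2
      calc |θ s ω - π s ω| ≤ |θ s ω| + |π s ω| := abs_sub _ _
        _ ≤ Cθ + Cπ := add_le_add (hCθ s hs) (hCπ s hs)
    have hIcomb := hIlin π hπ θ hθ (1 - l) l ω
    have hsplit : ∫ s, ((1 - l) * π s ω + l * θ s ω) ^ 2 ∂μ
        = (1 - l) * ∫ s, π s ω ^ 2 ∂μ + l * ∫ s, θ s ω ^ 2 ∂μ
          - l * (1 - l) * ∫ s, (θ s ω - π s ω) ^ 2 ∂μ := by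
      have heq : (fun s => ((1 - l) * π s ω + l * θ s ω) ^ 2)
          = fun s => ((1 - l) * π s ω ^ 2 + l * θ s ω ^ 2)
              - l * (1 - l) * (θ s ω - π s ω) ^ 2 := by
        funext s; ring
      have ha : Integrable (fun s => (1 - l) * π s ω ^ 2 + l * θ s ω ^ 2) μ := by
        exact (hπ2.const_mul _).add (hθ2.const_mul _)
      have hb : Integrable (fun s => l * (1 - l) * (θ s ω - π s ω) ^ 2) μ := by
        exact hd2.const_mul _
      rw [heq, integral_sub ha hb,
        integral_add (hπ2.const_mul _) (hθ2.const_mul _), integral_const_mul,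
        integral_const_mul, integral_const_mul]
    simp only [Lfun, ← hμ] at *
    rw [hIcomb, hsplit]
    ring
  have hnn : ∀ θ ∈ A, ∀ π ∈ A, ∀ l : ℝ, 0 ≤ l → l ≤ 1 → ∀ ω : Ω,
      0 ≤ (1 / 2) * l * (1 - l) * ∫ s in Ioc (0:ℝ) 1, (θ s ω - π s ω) ^ 2 ∂(ν ω) := by
    intro θ _ π _ l hl0 hl1 ω
    have h1 : (0:ℝ) ≤ (1 / 2) * l * (1 - l) := by
      have := sub_nonneg.2 hl1
      positivity
    exact mul_nonneg h1 (integral_nonneg fun s => sq_nonneg _)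
  constructor
  · intro θ hθ π hπ l hl0 hl1 ω
    exact ⟨key θ hθ π hπ l hl0 hl1 ω, hnn θ hθ π hπ l hl0 hl1 ω⟩
  · intro θ hθ π hπ l hl0 hl1
    have hcombA : (fun t ω => l * θ t ω + (1 - l) * π t ω) ∈ A :=
      hlin θ hθ π hπ l (1 - l)
    have hpt : ∀ ω, l * F (Lfun Iξ ν θ ω) + (1 - l) * F (Lfun Iξ ν π ω)
        ≤ F (Lfun Iξ ν (fun t ω => l * θ t ω + (1 - l) * π t ω) ω) := by
      intro ω
      have hk := key θ hθ π hπ l hl0 hl1 ω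
      have hn := hnn θ hθ π hπ l hl0 hl1 ω
      have hfun : (fun t ω => l * θ t ω + (1 - l) * π t ω)
          = (fun t ω => (1 - l) * π t ω + l * θ t ω) := by
        funext t ω; ring
      rw [hfun]
      have hge : l * Lfun Iξ ν θ ω + (1 - l) * Lfun Iξ ν π ω
          ≤ Lfun Iξ ν (fun t ω => (1 - l) * π t ω + l * θ t ω) ω := by linarith
      calc l * F (Lfun Iξ ν θ ω) + (1 - l) * F (Lfun Iξ ν π ω)
          ≤ F (l * Lfun Iξ ν θ ω + (1 - l) * Lfun Iξ ν π ω) := hFconc _ _ l hl0 hl1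
        _ ≤ F (Lfun Iξ ν (fun t ω => (1 - l) * π t ω + l * θ t ω) ω) :=
            hFmono.monotone hge
    have hLint : ∀ η ∈ A, Integrable (Lfun Iξ ν η) P := by
      intro η hη
      exact (hint η hη).1.sub ((hint η hη).2.const_mul (1 / 2))
    have hFint : ∀ η ∈ A, Integrable (fun ω => F (Lfun Iξ ν η ω)) P := by
      intro η hη
      have hL := hLint η hη
      refine Integrable.mono' ((integrable_const |F 0|).add (hL.abs.const_mul C))
        (hFcont.comp_aestronglyMeasurable hL.aestronglyMeasurable) ?_
      filter_upwards with ω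
      calc ‖F (Lfun Iξ ν η ω)‖ = |F (Lfun Iξ ν η ω)| := rfl
        _ ≤ |F (Lfun Iξ ν η ω) - F 0| + |F 0| := by
            simpa using abs_add_le (F (Lfun Iξ ν η ω) - F 0) (F 0)
        _ ≤ C * |Lfun Iξ ν η ω - 0| + |F 0| := by
            exact add_le_add (hlip _ _) le_rfl
        _ = |F 0| + C * |Lfun Iξ ν η ω| := by rw [sub_zero]; ring
    calc l * ∫ ω, F (Lfun Iξ ν θ ω) ∂P + (1 - l) * ∫ ω, F (Lfun Iξ ν π ω) ∂P
        = ∫ ω, (l * F (Lfun Iξ ν θ ω) + (1 - l) * F (Lfun Iξ ν π ω)) ∂P := by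
          rw [integral_add ((hFint θ hθ).const_mul l) ((hFint π hπ).const_mul _),
            integral_const_mul, integral_const_mul]
      _ ≤ ∫ ω, F (Lfun Iξ ν (fun t ω => l * θ t ω + (1 - l) * π t ω) ω) ∂P :=
          integral_mono (((hFint θ hθ).const_mul l).add ((hFint π hπ).const_mul _))
            (hFint _ hcombA) hpt
end
end

section
/- If there exists an A-martingale measure Q (a probability Q ∼ P under which the discounted price S̃ is an A-martingale), then the market is A-arbitrage free: there is no self-financing portfolio h ∈ A with terminal discounted wealth X̃_1 = ∫_0^1 h_t d⁻S̃_t satisfying P(X_1 ≥ 0) = 1 and P(X_1 > 0) > 0. -/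
open MeasureTheory Filter Set Topology

noncomputable section

section Aux

open MeasureTheory Filter Set Topology

variable {α : Type*} [MeasurableSpace α] {ι : Type*}

/-- Convergence in measure transfers along absolute continuity (for a finite target measure). -/
lemma tendstoInMeasure_of_absolutelyContinuous {P Q : Measure α} [IsFiniteMeasure Q]
    [SigmaFinite P] (hQP : Q ≪ P) {E : Type*} [PseudoMetricSpace E] {f : ι → α → E}
    {l : Filter ι} {g : α → E}
    (h : TendstoInMeasure P f l g) : TendstoInMeasure Q f l g := by
  intro ε hε
  set s : ι → Set α := fun i => {x | ε ≤ edist (f i x) (g x)} with hs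
  have hP : Tendsto (fun i => P (toMeasurable P (s i))) l (𝓝 0) := by
    simpa only [measure_toMeasurable] using h ε hε
  have hlt := Measure.lintegral_rnDeriv_lt_top Q P
  have hL : Tendsto (fun i => ∫⁻ x in toMeasurable P (s i), Q.rnDeriv P x ∂P) l (𝓝 0) :=
    tendsto_setLIntegral_zero hlt.ne hP
  have hle : ∀ i, Q (s i) ≤ ∫⁻ x in toMeasurable P (s i), Q.rnDeriv P x ∂P := by
    intro i
    calc Q (s i) ≤ Q (toMeasurable P (s i)) := measure_mono (subset_toMeasurable _ _)
    _ = ∫⁻ x in toMeasurable P (s i), Q.rnDeriv P x ∂P := by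
        conv_lhs => rw [← Measure.withDensity_rnDeriv_eq Q P hQP]
        rw [withDensity_apply _ (measurableSet_toMeasurable _ _)]
  exact tendsto_of_tendsto_of_tendsto_of_le_of_le tendsto_const_nhds hL
    (fun i => zero_le) hle

/-- Limits in measure along a nontrivial filter are a.e. unique. -/
lemma tendstoInMeasure_unique {μ : Measure α} {E : Type*} [MetricSpace E]
    {f : ι → α → E} {l : Filter ι} [l.NeBot] {g g' : α → E}
    (h1 : TendstoInMeasure μ f l g) (h2 : TendstoInMeasure μ f l g') : g =ᵐ[μ] g' := by
  have key : ∀ δ : ℝ, 0 < δ → μ {x | δ ≤ dist (g x) (g' x)} = 0 := by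
    intro δ hδ
    have hsub : ∀ i, {x | δ ≤ dist (g x) (g' x)} ⊆
        {x | δ / 2 ≤ dist (f i x) (g x)} ∪ {x | δ / 2 ≤ dist (f i x) (g' x)} := by
      intro i x hx
      simp only [Set.mem_union, Set.mem_setOf_eq]
      by_contra hcon
      push_neg at hcon
      have htri := dist_triangle_left (g x) (g' x) (f i x)
      have hx' : δ ≤ dist (g x) (g' x) := hx
      linarith [hcon.1, hcon.2]
    have hbd : ∀ i, μ {x | δ ≤ dist (g x) (g' x)} ≤
        μ {x | δ / 2 ≤ dist (f i x) (g x)} + μ {x | δ / 2 ≤ dist (f i x) (g' x)} := by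
      intro i
      exact le_trans (measure_mono (hsub i)) (measure_union_le _ _)
    have hδ2 : (0:ℝ) < δ / 2 := by linarith
    have hT : Tendsto (fun i => μ {x | δ / 2 ≤ dist (f i x) (g x)} +
        μ {x | δ / 2 ≤ dist (f i x) (g' x)}) l (𝓝 0) := by
      have := (h1 (ENNReal.ofReal (δ/2)) (ENNReal.ofReal_pos.mpr hδ2)).add
        (h2 (ENNReal.ofReal (δ/2)) (ENNReal.ofReal_pos.mpr hδ2))
      simpa [edist_dist, ENNReal.ofReal_le_ofReal_iff dist_nonneg] using this
    have hle0 : μ {x | δ ≤ dist (g x) (g' x)} ≤ 0 :=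
      ge_of_tendsto hT (Eventually.of_forall hbd)
    exact le_antisymm hle0 zero_le
  have hnull : μ {x | g x ≠ g' x} = 0 := by
    have hsub : {x | g x ≠ g' x} ⊆ ⋃ n : ℕ, {x | 1 / ((n:ℝ) + 1) ≤ dist (g x) (g' x)} := by
      intro x hx
      have hd : 0 < dist (g x) (g' x) := dist_pos.mpr hx
      obtain ⟨n, hn⟩ := exists_nat_one_div_lt hd
      exact Set.mem_iUnion.mpr ⟨n, le_of_lt hn⟩
    refine measure_mono_null hsub (measure_iUnion_null fun n => key _ (by positivity))
  filter_upwards [measure_eq_zero_iff_ae_notMem.mp hnull] with x hx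
  simpa using hx

end Aux

open CR in
/-- if there exists an `A`-martingale measure `Q` (a probability `Q ∼ P`
under which the discounted price `S̃` is an `A`-martingale), then the market is
`A`-arbitrage free: there is no `h ∈ A` whose discounted wealth
`X̃ = ∫_0^· h d⁻S̃` satisfies `X̃_1 ≥ 0` a.s. and `P(X̃_1 > 0) > 0`. -/
theorem stmt16_no_arbitrage
    {Ω : Type*} [MeasurableSpace Ω] (P Q : Measure Ω)
    [IsProbabilityMeasure P] [IsProbabilityMeasure Q]
    (hQP : Q ≪ P) (hPQ : P ≪ Q)
    (A : Set (ℝ → Ω → ℝ)) (Stilde : ℝ → Ω → ℝ)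
    (hmart : IsAMartingale Q A Stilde) :
    ¬ ∃ h ∈ A, ∃ X : ℝ → Ω → ℝ, IsImproperFwd P h Stilde X ∧
        (∀ᵐ ω ∂P, 0 ≤ X 1 ω) ∧ 0 < P {ω | 0 < X 1 ω} := by
  rintro ⟨h, hA, X, ⟨hfwdP, haeP⟩, hnn, hpos⟩
  obtain ⟨L, ⟨hfwdQ, haeQ⟩, hint⟩ := hmart h hA
  set t : ℕ → ℝ := fun n => 1 - 1 / ((n:ℝ) + 2) with ht
  have htmem : ∀ n, t n ∈ Ico (0:ℝ) 1 := by
    intro n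
    constructor
    · have h1 : 1 / ((n:ℝ) + 2) ≤ 1 := by
        rw [div_le_one (by positivity)]
        have : (0:ℝ) ≤ (n:ℝ) := Nat.cast_nonneg n
        linarith
      simp only [ht]
      linarith
    · have : (0:ℝ) < 1 / ((n:ℝ) + 2) := by positivity
      simp only [ht]
      linarith
  have heq : ∀ n, X (t n) =ᵐ[Q] L (t n) := by
    intro n
    have h1 : TendstoInMeasure P (fun ε => fwdApprox h Stilde ε (t n)) (𝓝[>] (0:ℝ))
        (X (t n)) := (hfwdP (t n) (htmem n)).2 (t n) ⟨(htmem n).1, le_rfl⟩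
    have h1Q := tendstoInMeasure_of_absolutelyContinuous hQP h1
    have h2 : TendstoInMeasure Q (fun ε => fwdApprox h Stilde ε (t n)) (𝓝[>] (0:ℝ))
        (L (t n)) := (hfwdQ (t n) (htmem n)).2 (t n) ⟨(htmem n).1, le_rfl⟩
    exact tendstoInMeasure_unique h1Q h2
  have htt : Tendsto t atTop (𝓝[<] (1:ℝ)) := by
    rw [tendsto_nhdsWithin_iff]
    constructor
    · have h0 : Tendsto (fun n : ℕ => 1 / ((n:ℝ) + 2)) atTop (𝓝 0) := by
        simp only [one_div]
        exact Tendsto.inv_tendsto_atTop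
          (tendsto_atTop_add_const_right _ 2 tendsto_natCast_atTop_atTop)
      have := h0.const_sub 1
      simpa [ht] using this
    · exact Eventually.of_forall fun n => (htmem n).2
  have hX1L1 : X 1 =ᵐ[Q] L 1 := by
    have haePQ : ∀ᵐ ω ∂Q, Tendsto (fun s => X s ω) (𝓝[<] (1:ℝ)) (𝓝 (X 1 ω)) :=
      haeP.filter_mono hQP.ae_le
    have hall : ∀ᵐ ω ∂Q, ∀ n, X (t n) ω = L (t n) ω := ae_all_iff.mpr heq
    filter_upwards [haePQ, haeQ, hall] with ω hXω hLω heqω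
    have l1 : Tendsto (fun n => X (t n) ω) atTop (𝓝 (X 1 ω)) := hXω.comp htt
    have l2 : Tendsto (fun n => X (t n) ω) atTop (𝓝 (L 1 ω)) :=
      (hLω.comp htt).congr fun n => (heqω n).symm
    exact tendsto_nhds_unique l1 l2
  obtain ⟨hintL, hzero⟩ := hint 1 ⟨zero_le_one, le_rfl⟩
  have hnnQ : 0 ≤ᵐ[Q] L 1 := by
    filter_upwards [hnn.filter_mono hQP.ae_le, hX1L1] with ω h1 h2
    simpa [← h2] using h1
  have hL0 : L 1 =ᵐ[Q] 0 := (integral_eq_zero_iff_of_nonneg_ae hnnQ hintL).mp hzero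
  have hX0 : X 1 =ᵐ[P] 0 := hPQ.ae_le (hX1L1.trans hL0)
  have hnull : P {ω | 0 < X 1 ω} = 0 := by
    have h0 : P {ω | ¬ X 1 ω = 0} = 0 := by
      have := ae_iff.mp hX0
      simpa using this
    exact measure_mono_null (fun ω hω => ne_of_gt hω) h0
  exact hpos.ne' hnull
end
end

section
/- Suppose there exists an A-martingale measure Q with G_0 trivial. If Q and Q₁ are two A-martingale measures, then E^Q[C̃] = E^{Q₁}[C̃] for every A-attainable contingent claim C (C̃ denoting the discounted claim). In particular, if the market is (A,L)-complete and L is an algebra, all A-martingale measures coincide on the σ-algebra generated by all bounded discounted contingent claims in L. -/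
open MeasureTheory Filter Set Topology

noncomputable section

section Aux

open CR
open scoped NNReal ENNReal

variable {Ω : Type*} [MeasurableSpace Ω]

/-- Uniqueness of limits in measure, for two equivalent measures. -/
private lemma CRaux.limit_unique_ac {P Q : Measure Ω}
    (hQP : Q ≪ P) {f : ℝ → Ω → ℝ} {g g' : Ω → ℝ}
    (h1 : TendstoInMeasure P f (𝓝[>] (0:ℝ)) g)
    (h2 : TendstoInMeasure Q f (𝓝[>] (0:ℝ)) g') :
    g =ᵐ[Q] g' := by
  obtain ⟨u, hu⟩ := exists_seq_tendsto (𝓝[>] (0:ℝ))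
  have h1u : TendstoInMeasure P (fun n => f (u n)) atTop g := fun ε hε => (h1 ε hε).comp hu
  have h2u : TendstoInMeasure Q (fun n => f (u n)) atTop g' := fun ε hε => (h2 ε hε).comp hu
  obtain ⟨ns, hmono, hns⟩ := h1u.exists_seq_tendsto_ae
  have h2' : TendstoInMeasure Q (fun i => f (u (ns i))) atTop g' :=
    fun ε hε => (h2u ε hε).comp hmono.tendsto_atTop
  obtain ⟨ms, hmono', hms⟩ := h2'.exists_seq_tendsto_ae
  have hnsQ : ∀ᵐ x ∂Q, Tendsto (fun i => f (u (ns i)) x) atTop (𝓝 (g x)) := hQP.ae_le hns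
  filter_upwards [hnsQ, hms] with x hx hx'
  exact tendsto_nhds_unique (hx.comp hmono'.tendsto_atTop) hx'

/-- The expectation under an `A`-martingale measure of an `A`-attainable claim is its
replication price. -/
private lemma CRaux.attainable_integral (P Q : Measure Ω) [IsProbabilityMeasure Q]
    (hQP : Q ≪ P) {A : Set (ℝ → Ω → ℝ)} {Stilde : ℝ → Ω → ℝ}
    (hQm : IsAMartingale Q A Stilde)
    {Ctil : Ω → ℝ} {x0 : ℝ} {h : ℝ → Ω → ℝ} (hA : h ∈ A) {L : ℝ → Ω → ℝ}
    (hL : IsImproperFwd P h Stilde L) (hC : ∀ᵐ ω ∂P, x0 + L 1 ω = Ctil ω) :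
    Integrable Ctil Q ∧ AEMeasurable Ctil Q ∧ ∫ ω, Ctil ω ∂Q = x0 := by
  obtain ⟨L', hL'impr, hL'int⟩ := hQm h hA
  have heq : ∀ t ∈ Ico (0:ℝ) 1, L t =ᵐ[Q] L' t := fun t ht =>
    CRaux.limit_unique_ac hQP ((hL.1 t ht).2 t ⟨ht.1, le_rfl⟩) ((hL'impr.1 t ht).2 t ⟨ht.1, le_rfl⟩)
  set tseq : ℕ → ℝ := fun n => 1 - 1 / (n + 2) with htseq
  have htmem : ∀ n, tseq n ∈ Ico (0:ℝ) 1 := by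
    intro n
    have h2 : (2:ℝ) ≤ (n:ℝ) + 2 := by have : (0:ℝ) ≤ (n:ℝ) := n.cast_nonneg; linarith
    have hpos : (0:ℝ) < (n:ℝ) + 2 := by positivity
    constructor
    · have : 1 / ((n:ℝ) + 2) ≤ 1 / 2 := by
        apply one_div_le_one_div_of_le <;> linarith
      simp only [htseq]; linarith
    · have : 0 < 1 / ((n:ℝ) + 2) := by positivity
      simp only [htseq]; linarith
  have htt : Tendsto tseq atTop (𝓝[<] (1:ℝ)) := by
    apply tendsto_nhdsWithin_of_tendsto_nhds_of_eventually_within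
    · have h0 : Tendsto (fun n : ℕ => 1 / ((n:ℝ) + 2)) atTop (𝓝 0) := by
        have h0' := (tendsto_one_div_add_atTop_nhds_zero_nat (𝕜 := ℝ)).comp (tendsto_add_atTop_nat 1)
        apply h0'.congr
        intro n; simp only [Function.comp_apply]; push_cast; ring_nf
      have h1 := (tendsto_const_nhds (x := (1:ℝ)) (f := atTop)).sub h0
      simp only [sub_zero] at h1
      exact h1
    · exact Eventually.of_forall fun n => (htmem n).2
  have hL1 : L 1 =ᵐ[Q] L' 1 := by
    have hall : ∀ᵐ ω ∂Q, ∀ n, L (tseq n) ω = L' (tseq n) ω :=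
      ae_all_iff.mpr fun n => heq _ (htmem n)
    have hlim : ∀ᵐ ω ∂Q, Tendsto (fun t => L t ω) (𝓝[<] (1:ℝ)) (𝓝 (L 1 ω)) := hQP.ae_le hL.2
    filter_upwards [hall, hlim, hL'impr.2] with ω h1 h2 h3
    exact tendsto_nhds_unique ((h2.comp htt).congr fun n => (h1 n)) (h3.comp htt)
  have hint : Integrable (L' 1) Q := (hL'int 1 ⟨zero_le_one, le_rfl⟩).1
  have hCQ : Ctil =ᵐ[Q] fun ω => x0 + L' 1 ω := by
    filter_upwards [hQP.ae_le hC, hL1] with ω h1 h2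
    rw [← h1, h2]
  have hint2 : Integrable (fun ω => x0 + L' 1 ω) Q := (integrable_const x0).add hint
  refine ⟨hint2.congr hCQ.symm, (hint2.aemeasurable).congr hCQ.symm, ?_⟩
  rw [integral_congr_ae hCQ, integral_add (integrable_const x0) hint,
    (hL'int 1 ⟨zero_le_one, le_rfl⟩).2, integral_const]
  simp

/-- Bounded a.e.-measurable functions are integrable w.r.t. a finite measure. -/
private lemma CRaux.integrable_of_bdd {Q : Measure Ω} [IsFiniteMeasure Q] {h : Ω → ℝ} {M : ℝ}
    (hm : AEMeasurable h Q) (hb : ∀ ω, |h ω| ≤ M) : Integrable h Q :=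
  Integrable.mono' (integrable_const M) hm.aestronglyMeasurable
    (Eventually.of_forall fun ω => by simpa using hb ω)

/-- Two probability measures giving the same integral to every member of a family of bounded
functions that is stable under products and linear combinations agree on finite intersections
of preimages of Borel sets under members of the family. -/
private lemma CRaux.core_pi {n : Type*} [Fintype n] [Nonempty n]
    (Q Q₁ : Measure Ω) [IsProbabilityMeasure Q] [IsProbabilityMeasure Q₁]
    (S : Set (Ω → ℝ))
    (hbdd : ∀ f ∈ S, ∃ M, ∀ ω, |f ω| ≤ M)
    (hmeas : ∀ f ∈ S, AEMeasurable f Q ∧ AEMeasurable f Q₁)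
    (hint : ∀ f ∈ S, ∫ ω, f ω ∂Q = ∫ ω, f ω ∂Q₁)
    (hSmul : ∀ f ∈ S, ∀ g ∈ S, (fun ω => f ω * g ω) ∈ S)
    (hSlin : ∀ f ∈ S, ∀ g ∈ S, ∀ a b : ℝ, (fun ω => a * f ω + b * g ω) ∈ S)
    (f : n → Ω → ℝ) (hf : ∀ i, f i ∈ S)
    (B : n → Set ℝ) (hB : ∀ i, MeasurableSet (B i)) :
    Q (⋂ i, f i ⁻¹' B i) = Q₁ (⋂ i, f i ⁻¹' B i) := by
  classical
  set Mi : n → ℝ := fun i => (hbdd (f i) (hf i)).choose with hMi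
  have hMi' : ∀ i ω, |f i ω| ≤ Mi i := fun i => (hbdd (f i) (hf i)).choose_spec
  set M : ℝ := 1 + ∑ i, |Mi i| with hM
  have hMb : ∀ i ω, |f i ω| ≤ M := by
    intro i ω
    have h1 : |Mi i| ≤ ∑ j, |Mi j| :=
      Finset.single_le_sum (f := fun j => |Mi j|) (fun j _ => abs_nonneg _) (Finset.mem_univ i)
    have := hMi' i ω
    have h2 : Mi i ≤ |Mi i| := le_abs_self _
    simp only [hM]; linarith
  set F : Ω → (n → ℝ) := fun ω i => f i ω with hFdef
  have hFQaux : ∀ Q' : Measure Ω, (∀ i, AEMeasurable (f i) Q') → AEMeasurable F Q' := by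
    intro Q' hm'
    refine ⟨fun ω i => (hm' i).mk _ ω,
      measurable_pi_lambda _ (fun i => (hm' i).measurable_mk), ?_⟩
    filter_upwards [ae_all_iff.mpr (fun i => (hm' i).ae_eq_mk)] with ω hω
    funext i; exact hω i
  have hFQ : AEMeasurable F Q := hFQaux Q fun i => (hmeas (f i) (hf i)).1
  have hFQ₁ : AEMeasurable F Q₁ := hFQaux Q₁ fun i => (hmeas (f i) (hf i)).2
  set K : Set (n → ℝ) := Set.pi univ (fun _ => Icc (-M) M) with hK
  have hFK : ∀ ω, F ω ∈ K := by
    intro ω i _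
    have := hMb i ω
    exact ⟨neg_le_of_abs_le this, le_of_abs_le this⟩
  have hKc : IsCompact K := isCompact_univ_pi fun _ => isCompact_Icc
  haveI : CompactSpace ↥K := isCompact_iff_compactSpace.mp hKc
  set coord : n → C(↥K, ℝ) := fun i =>
    ⟨fun y => (y : n → ℝ) i, (continuous_apply i).comp continuous_subtype_val⟩ with hcoord
  set Alg : Subalgebra ℝ C(↥K, ℝ) := Algebra.adjoin ℝ (Set.range coord) with hAlg
  have sep : Alg.SeparatesPoints := by
    intro y z hyz
    have : (y : n → ℝ) ≠ (z : n → ℝ) := fun h => hyz (Subtype.ext h)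
    obtain ⟨i, hi⟩ := Function.ne_iff.mp this
    exact ⟨coord i, ⟨coord i, Algebra.subset_adjoin (Set.mem_range_self i), rfl⟩, hi⟩
  obtain ⟨i₀⟩ := ‹Nonempty n›
  have h0S : ∃ z ∈ S, ∀ ω, z ω = (0:ℝ) := by
    refine ⟨fun ω => 0 * f i₀ ω + 0 * f i₀ ω, hSlin _ (hf i₀) _ (hf i₀) 0 0, fun ω => by ring⟩
  obtain ⟨z₀, hz₀S, hz₀⟩ := h0S
  have key : ∀ a : C(↥K, ℝ), a ∈ Alg →
      ∃ c : ℝ, ∃ g, g ∈ S ∧ ∀ ω, a ⟨F ω, hFK ω⟩ = c + g ω := by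
    intro a ha
    induction ha using Algebra.adjoin_induction with
    | mem x hx =>
        obtain ⟨i, rfl⟩ := hx
        exact ⟨0, f i, hf i, fun ω => by simp [hcoord, hFdef]⟩
    | algebraMap r =>
        exact ⟨r, z₀, hz₀S, fun ω => by simp [hz₀ ω, Algebra.algebraMap_eq_smul_one]⟩
    | add x y hx hy hx' hy' =>
        obtain ⟨c₁, g₁, hg₁, hv₁⟩ := hx'
        obtain ⟨c₂, g₂, hg₂, hv₂⟩ := hy'
        refine ⟨c₁ + c₂, _, hSlin _ hg₁ _ hg₂ 1 1, fun ω => ?_⟩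
        simp only [ContinuousMap.add_apply, hv₁ ω, hv₂ ω]; ring
    | mul x y hx hy hx' hy' =>
        obtain ⟨c₁, g₁, hg₁, hv₁⟩ := hx'
        obtain ⟨c₂, g₂, hg₂, hv₂⟩ := hy'
        refine ⟨c₁ * c₂, _,
          hSlin _ (hSlin _ hg₁ _ hg₂ c₂ c₁) _ (hSmul _ hg₁ _ hg₂) 1 1, fun ω => ?_⟩
        simp only [ContinuousMap.mul_apply, hv₁ ω, hv₂ ω]; ring
  have hSint : ∀ g ∈ S, Integrable g Q ∧ Integrable g Q₁ := by
    intro g hg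
    obtain ⟨Mg, hMg⟩ := hbdd g hg
    exact ⟨CRaux.integrable_of_bdd (hmeas g hg).1 hMg,
      CRaux.integrable_of_bdd (hmeas g hg).2 hMg⟩
  have main : ∀ φ : (n → ℝ) → ℝ, Continuous φ → ∀ Cφ : ℝ, (∀ y, |φ y| ≤ Cφ) →
      ∫ ω, φ (F ω) ∂Q = ∫ ω, φ (F ω) ∂Q₁ := by
    intro φ hφc Cφ hφb
    have hφm : AEMeasurable (fun ω => φ (F ω)) Q := hφc.measurable.comp_aemeasurable hFQ
    have hφm₁ : AEMeasurable (fun ω => φ (F ω)) Q₁ := hφc.measurable.comp_aemeasurable hFQ₁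
    have hφint : Integrable (fun ω => φ (F ω)) Q := CRaux.integrable_of_bdd hφm (fun ω => hφb _)
    have hφint₁ : Integrable (fun ω => φ (F ω)) Q₁ := CRaux.integrable_of_bdd hφm₁ (fun ω => hφb _)
    set D : ℝ := ∫ ω, φ (F ω) ∂Q - ∫ ω, φ (F ω) ∂Q₁ with hD
    have hDle : ∀ ε : ℝ, 0 < ε → |D| ≤ 2 * ε := by
      intro ε hε
      obtain ⟨a, ha⟩ := ContinuousMap.exists_mem_subalgebra_near_continuous_of_separatesPoints
        Alg sep (fun y => φ y.1) (hφc.comp continuous_subtype_val) ε hε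
      obtain ⟨c, g, hgS, hval⟩ := key a.1 a.2
      set h : Ω → ℝ := fun ω => c + g ω with hh
      have hhint : Integrable h Q := (integrable_const c).add (hSint g hgS).1
      have hhint₁ : Integrable h Q₁ := (integrable_const c).add (hSint g hgS).2
      have hinth : ∫ ω, h ω ∂Q = ∫ ω, h ω ∂Q₁ := by
        rw [integral_add (integrable_const c) (hSint g hgS).1,
          integral_add (integrable_const c) (hSint g hgS).2, hint g hgS]
        simp
      have hb1 : ∀ ω, ‖φ (F ω) - h ω‖ ≤ ε := by
        intro ω
        have := ha ⟨F ω, hFK ω⟩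
        rw [hval ω] at this
        rw [Real.norm_eq_abs, abs_sub_comm]
        exact le_of_lt (by simpa using this)
      have hQd : ‖∫ ω, φ (F ω) ∂Q - ∫ ω, h ω ∂Q‖ ≤ ε := by
        rw [← integral_sub hφint hhint]
        calc ‖∫ ω, (φ (F ω) - h ω) ∂Q‖ ≤ ε * (Q univ).toReal :=
              norm_integral_le_of_norm_le_const (Eventually.of_forall hb1)
        _ = ε := by simp
      have hQ₁d : ‖∫ ω, φ (F ω) ∂Q₁ - ∫ ω, h ω ∂Q₁‖ ≤ ε := by
        rw [← integral_sub hφint₁ hhint₁]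
        calc ‖∫ ω, (φ (F ω) - h ω) ∂Q₁‖ ≤ ε * (Q₁ univ).toReal :=
              norm_integral_le_of_norm_le_const (Eventually.of_forall hb1)
        _ = ε := by simp
      rw [Real.norm_eq_abs] at hQd hQ₁d
      have : D = (∫ ω, φ (F ω) ∂Q - ∫ ω, h ω ∂Q) - (∫ ω, φ (F ω) ∂Q₁ - ∫ ω, h ω ∂Q₁) := by
        rw [hD, hinth]; ring
      rw [this]
      calc |(∫ ω, φ (F ω) ∂Q - ∫ ω, h ω ∂Q) - (∫ ω, φ (F ω) ∂Q₁ - ∫ ω, h ω ∂Q₁)|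
          ≤ |∫ ω, φ (F ω) ∂Q - ∫ ω, h ω ∂Q| + |∫ ω, φ (F ω) ∂Q₁ - ∫ ω, h ω ∂Q₁| := abs_sub _ _
        _ ≤ 2 * ε := by linarith
    have : |D| = 0 := by
      by_contra hne
      have hpos : 0 < |D| := lt_of_le_of_ne (abs_nonneg D) (Ne.symm hne)
      have := hDle (|D| / 4) (by linarith)
      linarith
    have := abs_eq_zero.mp this
    linarith [sub_eq_zero.mp this]
  have hmap : Q.map F = Q₁.map F := by
    haveI : IsProbabilityMeasure (Q.map F) := Measure.isProbabilityMeasure_map hFQ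
    apply ext_of_forall_lintegral_eq_of_IsFiniteMeasure
    intro fb
    have hcont : Continuous fun y : n → ℝ => ((fb y : ℝ≥0) : ℝ) :=
      NNReal.continuous_coe.comp fb.continuous
    obtain ⟨Cb, hCb⟩ := fb.bounded
    have hbd : ∀ y, |((fb y : ℝ≥0) : ℝ)| ≤ (fb 0 : ℝ) + Cb := by
      intro y
      have h1 := hCb y 0
      rw [NNReal.dist_eq] at h1
      have h2 : ((fb y : ℝ≥0) : ℝ) - (fb 0 : ℝ≥0) ≤ Cb := (le_abs_self _).trans h1
      rw [abs_of_nonneg (fb y).coe_nonneg]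
      linarith
    have hi : Integrable (fun ω => ((fb (F ω) : ℝ≥0) : ℝ)) Q :=
      CRaux.integrable_of_bdd (hcont.measurable.comp_aemeasurable hFQ) (fun ω => hbd _)
    have hi₁ : Integrable (fun ω => ((fb (F ω) : ℝ≥0) : ℝ)) Q₁ :=
      CRaux.integrable_of_bdd (hcont.measurable.comp_aemeasurable hFQ₁) (fun ω => hbd _)
    have hmble : Measurable fun y : n → ℝ => ((fb y : ℝ≥0) : ℝ≥0∞) :=
      measurable_coe_nnreal_ennreal.comp fb.continuous.measurable
    rw [lintegral_map' hmble.aemeasurable hFQ,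
      lintegral_map' hmble.aemeasurable hFQ₁,
      lintegral_coe_eq_integral _ hi, lintegral_coe_eq_integral _ hi₁,
      main _ hcont _ hbd]
  have hset : (⋂ i, f i ⁻¹' B i) = F ⁻¹' (Set.pi univ B) := by
    ext ω
    simp [Set.mem_pi, hFdef]
  rw [hset, ← Measure.map_apply_of_aemeasurable hFQ (MeasurableSet.univ_pi hB), hmap,
    Measure.map_apply_of_aemeasurable hFQ₁ (MeasurableSet.univ_pi hB)]

end Aux

open CR in
/-- with `𝓖₀` trivial (so replication prices are constants), if `Q` and
`Q₁` are two `A`-martingale measures then `E^Q[C̃] = E^{Q₁}[C̃]` for every `A`-attainable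
(discounted) contingent claim `C̃`.  In particular, if the market is `(A,𝓛)`-complete and
`𝓛` is an algebra, all `A`-martingale measures coincide on the σ-algebra generated by the
bounded (discounted) contingent claims in `𝓛`. -/
theorem stmt18_martingale_measures_agree
    {Ω : Type*} [MeasurableSpace Ω] (P Q Q₁ : Measure Ω)
    [IsProbabilityMeasure P] [IsProbabilityMeasure Q] [IsProbabilityMeasure Q₁]
    (A : Set (ℝ → Ω → ℝ)) (Stilde : ℝ → Ω → ℝ)
    (hQ : Q ≪ P ∧ P ≪ Q ∧ IsAMartingale Q A Stilde)
    (hQ₁ : Q₁ ≪ P ∧ P ≪ Q₁ ∧ IsAMartingale Q₁ A Stilde)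
    (𝓛 : Set (Ω → ℝ)) :
    (∀ Ctil : Ω → ℝ,
      (∃ x0 : ℝ, ∃ h ∈ A, ∃ L : ℝ → Ω → ℝ, IsImproperFwd P h Stilde L ∧
          ∀ᵐ ω ∂P, x0 + L 1 ω = Ctil ω) →
      ∫ ω, Ctil ω ∂Q = ∫ ω, Ctil ω ∂Q₁) ∧
    (((∀ Ctil ∈ 𝓛, ∃ x0 : ℝ, ∃ h ∈ A, ∃ L : ℝ → Ω → ℝ,
          IsImproperFwd P h Stilde L ∧ ∀ᵐ ω ∂P, x0 + L 1 ω = Ctil ω) ∧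
        (∀ Ctil ∈ 𝓛, ∀ Dtil ∈ 𝓛, (fun ω => Ctil ω * Dtil ω) ∈ 𝓛) ∧
        (∀ Ctil ∈ 𝓛, ∀ Dtil ∈ 𝓛, ∀ a b : ℝ,
          (fun ω => a * Ctil ω + b * Dtil ω) ∈ 𝓛)) →
      ∀ s : Set Ω,
        MeasurableSet[⨆ (Ctil : Ω → ℝ)
          (_ : Ctil ∈ 𝓛 ∧ ∃ M : ℝ, ∀ ω, |Ctil ω| ≤ M),
          MeasurableSpace.comap Ctil (borel ℝ)] s →
        Q s = Q₁ s) := by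
  obtain ⟨hQP, hPQ, hQm⟩ := hQ
  obtain ⟨hQ₁P, hPQ₁, hQ₁m⟩ := hQ₁
  -- Part 1: expectations of attainable claims agree.
  have key : ∀ Ctil : Ω → ℝ,
      (∃ x0 : ℝ, ∃ h ∈ A, ∃ L : ℝ → Ω → ℝ, IsImproperFwd P h Stilde L ∧
          ∀ᵐ ω ∂P, x0 + L 1 ω = Ctil ω) →
      Integrable Ctil Q ∧ Integrable Ctil Q₁ ∧ AEMeasurable Ctil P ∧
        ∫ ω, Ctil ω ∂Q = ∫ ω, Ctil ω ∂Q₁ := by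
    intro Ctil hatt
    obtain ⟨x0, h, hA, L, hL, hC⟩ := hatt
    have k1 := CRaux.attainable_integral P Q hQP hQm hA hL hC
    have k2 := CRaux.attainable_integral P Q₁ hQ₁P hQ₁m hA hL hC
    refine ⟨k1.1, k2.1, ?_, by rw [k1.2.2, k2.2.2]⟩
    exact ⟨k1.2.1.mk _, k1.2.1.measurable_mk, hPQ.ae_le k1.2.1.ae_eq_mk⟩
  refine ⟨fun Ctil hatt => (key Ctil hatt).2.2.2, ?_⟩
  -- Part 2: completeness and the algebra property force the measures to agree.
  rintro ⟨hCompl, hMul, hLin⟩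
  set S : Set (Ω → ℝ) := {C | C ∈ 𝓛 ∧ ∃ M : ℝ, ∀ ω, |C ω| ≤ M} with hSdef
  have hSatt : ∀ f ∈ S, Integrable f Q ∧ Integrable f Q₁ ∧ AEMeasurable f P ∧
      ∫ ω, f ω ∂Q = ∫ ω, f ω ∂Q₁ := fun f hf => key f (hCompl f hf.1)
  have hbdd : ∀ f ∈ S, ∃ M, ∀ ω, |f ω| ≤ M := fun f hf => hf.2
  have hmeas : ∀ f ∈ S, AEMeasurable f Q ∧ AEMeasurable f Q₁ := fun f hf =>
    ⟨(hSatt f hf).2.2.1.mono_ac hQP, (hSatt f hf).2.2.1.mono_ac hQ₁P⟩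
  have hint : ∀ f ∈ S, ∫ ω, f ω ∂Q = ∫ ω, f ω ∂Q₁ := fun f hf => (hSatt f hf).2.2.2
  have hSmul : ∀ f ∈ S, ∀ g ∈ S, (fun ω => f ω * g ω) ∈ S := by
    rintro f ⟨hfL, Mf, hMf⟩ g ⟨hgL, Mg, hMg⟩
    refine ⟨hMul f hfL g hgL, Mf * Mg, fun ω => ?_⟩
    rw [abs_mul]
    exact mul_le_mul (hMf ω) (hMg ω) (abs_nonneg _) ((abs_nonneg _).trans (hMf ω))
  have hSlin : ∀ f ∈ S, ∀ g ∈ S, ∀ a b : ℝ, (fun ω => a * f ω + b * g ω) ∈ S := by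
    rintro f ⟨hfL, Mf, hMf⟩ g ⟨hgL, Mg, hMg⟩ a b
    refine ⟨hLin f hfL g hgL a b, |a| * Mf + |b| * Mg, fun ω => ?_⟩
    calc |a * f ω + b * g ω| ≤ |a * f ω| + |b * g ω| := abs_add_le _ _
      _ = |a| * |f ω| + |b| * |g ω| := by rw [abs_mul, abs_mul]
      _ ≤ |a| * Mf + |b| * Mg := by
          gcongr
          exacts [hMf ω, hMg ω]
  -- π-λ argument
  intro s hs
  have H := @MeasurableSpace.induction_on_inter Ω
      (⨆ (Ctil : Ω → ℝ) (_ : Ctil ∈ 𝓛 ∧ ∃ M : ℝ, ∀ ω, |Ctil ω| ≤ M),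
        MeasurableSpace.comap Ctil (borel ℝ))
      (fun u _ => NullMeasurableSet u P ∧ Q u = Q₁ u)
      (piiUnionInter
        (fun C => {u | MeasurableSet[MeasurableSpace.comap C (borel ℝ)] u}) S)
      (generateFrom_piiUnionInter_measurableSet
        (fun C => MeasurableSpace.comap C (borel ℝ)) S).symm
      (isPiSystem_piiUnionInter _
        (fun C => @MeasurableSpace.isPiSystem_measurableSet Ω
          (MeasurableSpace.comap C (borel ℝ))) S)
      ⟨MeasurableSet.empty.nullMeasurableSet, by simp⟩
      ?_ ?_ ?_
  · exact (H s hs).2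
  · -- basic sets: finite intersections of preimages of Borel sets
    rintro t ⟨pt, hptS, ft, hft, rfl⟩
    classical
    rcases pt.eq_empty_or_nonempty with rfl | hne
    · simp only [Finset.notMem_empty, Set.iInter_of_empty, Set.iInter_univ]
      exact ⟨MeasurableSet.univ.nullMeasurableSet, by simp⟩
    · haveI : Nonempty ↥pt := Finset.nonempty_coe_sort.mpr hne
      have hchoice : ∀ i : ↥pt, ∃ B : Set ℝ, MeasurableSet B ∧ (i.1 : Ω → ℝ) ⁻¹' B = ft i.1 := by
        intro i
        obtain ⟨B, hB, hpre⟩ := MeasurableSpace.measurableSet_comap.mp (hft i.1 i.2)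
        exact ⟨B, (BorelSpace.measurable_eq (α := ℝ)).symm ▸ hB, hpre⟩
      choose Bf hBm hBpre using hchoice
      have hset : (⋂ x ∈ pt, ft x) = ⋂ i : ↥pt, (i.1 : Ω → ℝ) ⁻¹' Bf i := by
        ext ω
        simp only [Set.mem_iInter]
        constructor
        · intro hH i
          rw [hBpre i]
          exact hH i.1 i.2
        · intro hH x hx
          rw [← hBpre ⟨x, hx⟩]
          exact hH ⟨x, hx⟩
      rw [hset]
      have hP : ∀ i : ↥pt, AEMeasurable (i.1 : Ω → ℝ) P :=
        fun i => (hSatt i.1 (hptS i.2)).2.2.1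
      constructor
      · exact NullMeasurableSet.iInter fun i => (hP i).nullMeasurable (hBm i)
      · exact CRaux.core_pi Q Q₁ S hbdd hmeas hint hSmul hSlin
          (fun i : ↥pt => (i.1 : Ω → ℝ)) (fun i => hptS i.2) Bf hBm
  · -- complements
    rintro t - ⟨hnm, heq⟩
    refine ⟨hnm.compl, ?_⟩
    have h1 := measure_add_measure_compl₀ (hnm.mono_ac hQP)
    have h2 := measure_add_measure_compl₀ (hnm.mono_ac hQ₁P)
    rw [measure_univ] at h1 h2
    have h3 : Q t + Q tᶜ = Q₁ t + Q₁ tᶜ := by rw [h1, h2]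
    rw [heq] at h3
    exact (ENNReal.add_right_inj (measure_ne_top Q₁ t)).mp h3
  · -- countable disjoint unions
    rintro g hd - hCg
    refine ⟨NullMeasurableSet.iUnion fun i => (hCg i).1, ?_⟩
    rw [measure_iUnion₀ (fun i j hij => ((hd hij).aedisjoint))
        (fun i => ((hCg i).1).mono_ac hQP),
      measure_iUnion₀ (fun i j hij => ((hd hij).aedisjoint))
        (fun i => ((hCg i).1).mono_ac hQ₁P)]
    exact tsum_congr fun i => (hCg i).2
end
end
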